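/- arXiv:1906.01812 — 11 statements merged into one kernel-verified Lean document; each statement's English description precedes it below -/
import Mathlib

section
/- For integers r ≥ t ≥ 2 and positive integers n1, …, nr, the maximum number of edges of a K_t-free subgraph of the complete r-partite graph K_{n1,…,nr} equals the maximum, over all partitions 𝒫 of {1,…,r} into t−1 parts, of Σ_{I ≠ I' ∈ 𝒫} n_I · n_{I'}, where n_I = Σ_{i∈I} n_i and the sum is over unordered pairs of distinct parts of 𝒫. -/
open Finset

section Aux

/-- Weighted Turán-type lemma: a graph with no clique of size `s + 2` inside `A`
admits an `(s+1)`-coloring `P` whose weighted cross-sum dominates the weighted edge sum. -/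
lemma lemW {V : Type*} [Fintype V] [DecidableEq V] (w : V → ℕ) :
    ∀ (s : ℕ) (H : SimpleGraph V) (_ : DecidableRel H.Adj) (A : Finset V),
      H.CliqueFreeOn (A : Set V) (s + 2) →
      ∃ P : V → Fin (s + 1),
        (∑ u ∈ A, ∑ v ∈ A, if H.Adj u v then w u * w v else 0) ≤
        ∑ u ∈ A, ∑ v ∈ A, if P u ≠ P v then w u * w v else 0 := by
  intro s
  induction s with
  | zero =>
    intro H hdec A hcf
    refine ⟨fun _ => 0, ?_⟩
    have h0 : (∑ u ∈ A, ∑ v ∈ A, if H.Adj u v then w u * w v else 0) = 0 := by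
      apply Finset.sum_eq_zero; intro u hu
      apply Finset.sum_eq_zero; intro v hv
      rw [if_neg]
      intro hadj
      have hcl : H.IsNClique 2 {u, v} := by
        have h1 : H.IsNClique 1 {v} := SimpleGraph.isNClique_one.2 ⟨v, rfl⟩
        have := h1.insert (a := u) (by intro b hb; simp at hb; subst hb; exact hadj)
        simpa using this
      exact hcf (by intro z hz; simp at hz; rcases hz with rfl | rfl <;> simpa) hcl
    rw [h0]
    exact Nat.zero_le _
  | succ s ih =>
    intro H hdec A hcf
    rcases A.eq_empty_or_nonempty with rfl | hA
    · exact ⟨fun _ => 0, by simp⟩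
    obtain ⟨v, hvA, hvmax⟩ :=
      Finset.exists_max_image A (fun u => ∑ z ∈ A, if H.Adj u z then w z else 0) hA
    set A' : Finset V := A.filter (fun u => H.Adj v u) with hA'def
    have hA'A : A' ⊆ A := Finset.filter_subset _ _
    have hcf' : H.CliqueFreeOn (A' : Set V) (s + 2) := by
      intro T hT hclT
      have hvT : v ∉ T := by
        intro hv
        have : H.Adj v v := (Finset.mem_filter.1 (hT hv)).2
        exact H.irrefl this
      have : H.IsNClique (s + 3) (insert v T) :=
        hclT.insert (fun b hb => (Finset.mem_filter.1 (hT hb)).2)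
      refine hcf ?_ this
      intro z hz
      rcases Finset.mem_insert.1 hz with rfl | hz
      · exact hvA
      · exact hA'A (hT hz)
    obtain ⟨Q, hQ⟩ := ih H hdec A' hcf'
    refine ⟨fun u => if u ∈ A' then (Q u).castSucc else Fin.last (s + 1), ?_⟩
    set P : V → Fin (s + 2) := fun u => if u ∈ A' then (Q u).castSucc else Fin.last (s + 1)
      with hPdef
    set B : Finset V := A \ A' with hBdef
    have hsplit : ∀ f : V → ℕ, ∑ u ∈ A, f u = ∑ u ∈ A', f u + ∑ u ∈ B, f u := by
      intro f
      rw [hBdef, add_comm, Finset.sum_sdiff hA'A]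
    set WA : ℕ := ∑ z ∈ A', w z with hWA
    set WB : ℕ := ∑ z ∈ B, w z with hWB
    have hPA' : ∀ u ∈ A', P u = (Q u).castSucc := fun u hu => if_pos hu
    have hPB : ∀ u ∈ B, P u = Fin.last (s + 1) := fun u hu => if_neg (Finset.mem_sdiff.1 hu).2
    have hwdeg : ∀ u ∈ B, (∑ z ∈ A, if H.Adj u z then w z else 0) ≤ WA := by
      intro u hu
      refine le_trans (hvmax u (Finset.mem_sdiff.1 hu).1) (le_of_eq ?_)
      rw [hWA, hA'def, Finset.sum_filter]
    have e1 : ∀ u, (∑ z ∈ A, if H.Adj u z then w u * w z else 0)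
        = w u * ∑ z ∈ A, (if H.Adj u z then w z else 0) := by
      intro u; rw [Finset.mul_sum]
      exact Finset.sum_congr rfl (fun z _ => by split <;> simp)
    have hb3 : (∑ u ∈ B, ∑ z ∈ A, if H.Adj u z then w u * w z else 0) ≤ WB * WA := by
      rw [hWB, Finset.sum_mul]
      refine Finset.sum_le_sum (fun u hu => ?_)
      rw [e1 u]
      exact Nat.mul_le_mul_left _ (hwdeg u hu)
    have hb2 : (∑ u ∈ A', ∑ z ∈ B, if H.Adj u z then w u * w z else 0) ≤ WA * WB := by
      rw [hWA, hWB, Finset.sum_mul_sum]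
      refine Finset.sum_le_sum (fun u _ => Finset.sum_le_sum (fun z _ => ?_))
      split <;> simp
    have hS11 : (∑ u ∈ A', ∑ z ∈ A', if P u ≠ P z then w u * w z else 0)
        = ∑ u ∈ A', ∑ z ∈ A', if Q u ≠ Q z then w u * w z else 0 := by
      refine Finset.sum_congr rfl (fun u hu => Finset.sum_congr rfl (fun z hz => ?_))
      rw [hPA' u hu, hPA' z hz]
      congr 1
      simp [Fin.castSucc_inj]
    have hS12 : (∑ u ∈ A', ∑ z ∈ B, if P u ≠ P z then w u * w z else 0) = WA * WB := by
      rw [hWA, hWB, Finset.sum_mul_sum]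
      refine Finset.sum_congr rfl (fun u hu => Finset.sum_congr rfl (fun z hz => ?_))
      rw [if_pos]
      rw [hPA' u hu, hPB z hz]
      exact (Fin.castSucc_lt_last (Q u)).ne
    have hS21 : (∑ u ∈ B, ∑ z ∈ A', if P u ≠ P z then w u * w z else 0) = WB * WA := by
      rw [hWB, hWA, Finset.sum_mul_sum]
      refine Finset.sum_congr rfl (fun u hu => Finset.sum_congr rfl (fun z hz => ?_))
      rw [if_pos]
      rw [hPA' z hz, hPB u hu]
      exact (Fin.castSucc_lt_last (Q z)).ne'
    have hL : (∑ u ∈ A, ∑ z ∈ A, if H.Adj u z then w u * w z else 0)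
        = (∑ u ∈ A', ∑ z ∈ A', if H.Adj u z then w u * w z else 0)
          + (∑ u ∈ A', ∑ z ∈ B, if H.Adj u z then w u * w z else 0)
          + (∑ u ∈ B, ∑ z ∈ A, if H.Adj u z then w u * w z else 0) := by
      rw [hsplit (fun u => ∑ z ∈ A, if H.Adj u z then w u * w z else 0)]
      have : ∀ u : V, (∑ z ∈ A, if H.Adj u z then w u * w z else 0)
          = (∑ z ∈ A', if H.Adj u z then w u * w z else 0)
            + ∑ z ∈ B, if H.Adj u z then w u * w z else 0 := fun u => hsplit _
      conv_lhs => rw [Finset.sum_congr rfl (fun u (_ : u ∈ A') => this u)]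
      rw [Finset.sum_add_distrib]
    have hR : (∑ u ∈ A, ∑ z ∈ A, if P u ≠ P z then w u * w z else 0)
        = (∑ u ∈ A', ∑ z ∈ A', if P u ≠ P z then w u * w z else 0)
          + (∑ u ∈ A', ∑ z ∈ B, if P u ≠ P z then w u * w z else 0)
          + ((∑ u ∈ B, ∑ z ∈ A', if P u ≠ P z then w u * w z else 0)
          + ∑ u ∈ B, ∑ z ∈ B, if P u ≠ P z then w u * w z else 0) := by
      rw [hsplit (fun u => ∑ z ∈ A, if P u ≠ P z then w u * w z else 0)]
      have : ∀ u : V, (∑ z ∈ A, if P u ≠ P z then w u * w z else 0)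
          = (∑ z ∈ A', if P u ≠ P z then w u * w z else 0)
            + ∑ z ∈ B, if P u ≠ P z then w u * w z else 0 := fun u => hsplit _
      conv_lhs => rw [Finset.sum_congr rfl (fun u (_ : u ∈ A') => this u),
        Finset.sum_congr rfl (fun u (_ : u ∈ B) => this u)]
      rw [Finset.sum_add_distrib, Finset.sum_add_distrib]
    rw [hL, hR, hS11, hS12, hS21]
    have := add_le_add (add_le_add hQ hb2) hb3
    refine le_trans this ?_
    omega

lemma count_pi {r : ℕ} (n : Fin r → ℕ) {i i' : Fin r} (h : i ≠ i')
    (g : Fin (n i) → Fin (n i') → ℕ) :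
    n i * n i' * ∑ x : (∀ k, Fin (n k)), g (x i) (x i')
      = (∏ k, n k) * ∑ a, ∑ b, g a b := by
  classical
  let i'' : {k : Fin r // k ≠ i} := ⟨i', h.symm⟩
  let e : (∀ k, Fin (n k)) ≃
      Fin (n i) × (Fin (n i') × ∀ j : {j : {k : Fin r // k ≠ i} // j ≠ i''}, Fin (n j.1.1)) :=
    (Equiv.piSplitAt i (fun k => Fin (n k))).trans
      (Equiv.prodCongr (Equiv.refl (Fin (n i)))
        (Equiv.piSplitAt i'' (fun k : {k : Fin r // k ≠ i} => Fin (n k.1))))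
  have h1 : ∑ x : (∀ k, Fin (n k)), g (x i) (x i')
      = ∑ p : Fin (n i) × (Fin (n i') × ∀ j : {j : {k : Fin r // k ≠ i} // j ≠ i''},
          Fin (n j.1.1)), g p.1 p.2.1 :=
    Equiv.sum_comp e (fun p => g p.1 p.2.1)
  have h2 : ∑ p : Fin (n i) × (Fin (n i') × ∀ j : {j : {k : Fin r // k ≠ i} // j ≠ i''},
        Fin (n j.1.1)), g p.1 p.2.1
      = (Fintype.card (∀ j : {j : {k : Fin r // k ≠ i} // j ≠ i''}, Fin (n j.1.1)))
          * ∑ a, ∑ b, g a b := by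
    rw [Fintype.sum_prod_type]
    rw [Finset.mul_sum]
    refine Finset.sum_congr rfl (fun a _ => ?_)
    rw [Fintype.sum_prod_type, Finset.mul_sum]
    refine Finset.sum_congr rfl (fun b _ => ?_)
    simp [Finset.sum_const, Finset.card_univ, mul_comm]
  have h3 : (∏ k, n k) = n i * (n i' *
      Fintype.card (∀ j : {j : {k : Fin r // k ≠ i} // j ≠ i''}, Fin (n j.1.1))) := by
    calc (∏ k, n k) = Fintype.card (∀ k, Fin (n k)) := by simp
      _ = _ := by rw [Fintype.card_congr e]; simp
  rw [h1, h2, h3]; ring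

lemma sigma_sum {r : ℕ} (n : Fin r → ℕ) (f : (Σ i : Fin r, Fin (n i)) → ℕ) :
    ∑ u : Σ i : Fin r, Fin (n i), f u = ∑ i, ∑ a : Fin (n i), f ⟨i, a⟩ := by
  rw [← Finset.univ_sigma_univ, Finset.sum_sigma]

lemma rep {r : ℕ} (n : Fin r → ℕ) (hn : ∀ i, 1 ≤ n i)
    (G : SimpleGraph (Σ i : Fin r, Fin (n i))) (hdec : DecidableRel G.Adj)
    (hG : G ≤ SimpleGraph.completeMultipartiteGraph (fun i : Fin r => Fin (n i))) :
    ∃ x : ∀ i, Fin (n i),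
      (∑ u : Σ i : Fin r, Fin (n i), ∑ v : Σ i : Fin r, Fin (n i),
        if G.Adj u v then 1 else 0) ≤
      ∑ i, ∑ i', if G.Adj ⟨i, x i⟩ ⟨i', x i'⟩ then n i * n i' else 0 := by
  have key : (∑ x : ∀ k, Fin (n k), ∑ i, ∑ i',
        if G.Adj ⟨i, x i⟩ ⟨i', x i'⟩ then n i * n i' else 0)
      = (∏ k, n k) * ∑ u : Σ i : Fin r, Fin (n i), ∑ v : Σ i : Fin r, Fin (n i),
          if G.Adj u v then 1 else 0 := by
    have hsig : (∑ u : Σ i : Fin r, Fin (n i), ∑ v : Σ i : Fin r, Fin (n i),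
          if G.Adj u v then 1 else 0)
        = ∑ i, ∑ i', ∑ a : Fin (n i), ∑ b : Fin (n i'),
            if G.Adj ⟨i, a⟩ ⟨i', b⟩ then 1 else 0 := by
      rw [sigma_sum n]
      refine Finset.sum_congr rfl (fun i _ => ?_)
      have hpt : ∀ a : Fin (n i),
          (∑ v : Σ i : Fin r, Fin (n i), if G.Adj ⟨i, a⟩ v then 1 else 0)
          = ∑ i', ∑ b : Fin (n i'), if G.Adj ⟨i, a⟩ ⟨i', b⟩ then 1 else 0 :=
        fun a => sigma_sum n _
      rw [Finset.sum_congr rfl (fun a _ => hpt a), Finset.sum_comm]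
    rw [hsig, Finset.sum_comm, Finset.mul_sum]
    refine Finset.sum_congr rfl (fun i _ => ?_)
    have hswap : (∑ x : ∀ k, Fin (n k), ∑ i',
          if G.Adj ⟨i, x i⟩ ⟨i', x i'⟩ then n i * n i' else 0)
        = ∑ i', ∑ x : ∀ k, Fin (n k),
            if G.Adj ⟨i, x i⟩ ⟨i', x i'⟩ then n i * n i' else 0 := Finset.sum_comm
    rw [hswap, Finset.mul_sum]
    refine Finset.sum_congr rfl (fun i' _ => ?_)
    by_cases hii : i = i'
    · subst hii
      have hno : ∀ a b : Fin (n i), ¬ G.Adj ⟨i, a⟩ ⟨i, b⟩ := fun a b hadj => (hG hadj) rfl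
      simp [hno]
    · have hpull : (∑ x : ∀ k, Fin (n k),
          if G.Adj ⟨i, x i⟩ ⟨i', x i'⟩ then n i * n i' else 0)
          = n i * n i' * ∑ x : ∀ k, Fin (n k),
              if G.Adj ⟨i, x i⟩ ⟨i', x i'⟩ then 1 else 0 := by
        rw [Finset.mul_sum]
        exact Finset.sum_congr rfl (fun x _ => by split <;> simp)
      rw [hpull, count_pi n hii (fun a b => if G.Adj ⟨i, a⟩ ⟨i', b⟩ then 1 else 0)]
  by_contra hcon
  push_neg at hcon
  have hne : (Finset.univ : Finset (∀ k, Fin (n k))).Nonempty :=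
    ⟨fun k => ⟨0, hn k⟩, Finset.mem_univ _⟩
  have hlt := Finset.sum_lt_sum_of_nonempty hne (fun x _ => hcon x)
  rw [key, Finset.sum_const, Finset.card_univ] at hlt
  simp only [smul_eq_mul, Fintype.card_pi, Fintype.card_fin] at hlt
  exact absurd hlt (lt_irrefl _)

lemma surjectivize {r s : ℕ} (hs : s + 1 ≤ r) (n : Fin r → ℕ) (P : Fin r → Fin (s + 1)) :
    ∃ P' : Fin r → Fin (s + 1), Function.Surjective P' ∧
      (∑ i, ∑ i', if P i ≠ P i' then n i * n i' else 0) ≤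
      ∑ i, ∑ i', if P' i ≠ P' i' then n i * n i' else 0 := by
  suffices H : ∀ k (P : Fin r → Fin (s + 1)), s + 1 - (Finset.image P Finset.univ).card ≤ k →
      ∃ P' : Fin r → Fin (s + 1), Function.Surjective P' ∧
        (∑ i, ∑ i', if P i ≠ P i' then n i * n i' else 0) ≤
        ∑ i, ∑ i', if P' i ≠ P' i' then n i * n i' else 0 by
    exact H (s + 1) P (Nat.sub_le _ _)
  intro k
  induction k with
  | zero =>
    intro P hk
    refine ⟨P, ?_, le_rfl⟩
    have himg : Finset.image P Finset.univ = Finset.univ := by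
      apply Finset.eq_univ_of_card
      have h1 : (Finset.image P Finset.univ).card ≤ Fintype.card (Fin (s + 1)) :=
        Finset.card_le_card (Finset.subset_univ _) |>.trans (by simp)
      simp only [Fintype.card_fin] at h1 ⊢
      omega
    intro j
    have : j ∈ Finset.image P Finset.univ := himg ▸ Finset.mem_univ j
    obtain ⟨i, _, hij⟩ := Finset.mem_image.1 this
    exact ⟨i, hij⟩
  | succ k ih =>
    intro P hk
    by_cases hsurj : Function.Surjective P
    · exact ⟨P, hsurj, le_rfl⟩
    · obtain ⟨j, hj⟩ : ∃ j, ∀ i, P i ≠ j := by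
        rw [Function.Surjective] at hsurj
        push_neg at hsurj
        obtain ⟨j, hj⟩ := hsurj
        exact ⟨j, fun i h => hj i h⟩
      have hjim : j ∉ Finset.image P Finset.univ := by
        intro hmem
        obtain ⟨i, _, hi⟩ := Finset.mem_image.1 hmem
        exact hj i hi
      have hninj : ¬ Function.Injective P := by
        intro hinj
        apply hjim
        have hcardim : (Finset.image P Finset.univ).card = r := by
          rw [Finset.card_image_of_injective _ hinj, Finset.card_univ, Fintype.card_fin]
        have himun : Finset.image P Finset.univ = Finset.univ := by
          apply Finset.eq_univ_of_card
          have h2 := Finset.card_le_card (Finset.subset_univ (Finset.image P Finset.univ))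
          simp only [Finset.card_univ, Fintype.card_fin] at h2 ⊢
          omega
        rw [himun]; exact Finset.mem_univ j
      rw [Function.not_injective_iff] at hninj
      obtain ⟨a, b, hab, hne⟩ := hninj
      set P' : Fin r → Fin (s + 1) := Function.update P a j with hP'def
      have hP'a : P' a = j := Function.update_self a j P
      have hP'ne : ∀ c, c ≠ a → P' c = P c := fun c hc => Function.update_of_ne hc j P
      have hpt : ∀ i i' : Fin r, (if P i ≠ P i' then n i * n i' else 0) ≤
          (if P' i ≠ P' i' then n i * n i' else 0) := by
        intro i i'
        by_cases hia : i = a <;> by_cases hi'a : i' = a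
        · subst hia; subst hi'a; simp
        · subst hia
          rw [hP'a, hP'ne i' hi'a, if_pos (Ne.symm (hj i'))]
          split <;> simp
        · subst hi'a
          rw [hP'a, hP'ne i hia, if_pos (hj i)]
          split <;> simp
        · rw [hP'ne i hia, hP'ne i' hi'a]
      have himg : insert j (Finset.image P Finset.univ) ⊆ Finset.image P' Finset.univ := by
        intro y hy
        rcases Finset.mem_insert.1 hy with rfl | hy
        · exact Finset.mem_image.2 ⟨a, Finset.mem_univ a, hP'a⟩
        · obtain ⟨c, _, hc⟩ := Finset.mem_image.1 hy
          by_cases hca : c = a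
          · subst hca
            refine Finset.mem_image.2 ⟨b, Finset.mem_univ b, ?_⟩
            rw [hP'ne b (fun h => hne (h ▸ rfl))]
            rw [← hab, hc]
          · exact Finset.mem_image.2 ⟨c, Finset.mem_univ c, (hP'ne c hca).trans hc⟩
      have hcard : (Finset.image P Finset.univ).card + 1 ≤ (Finset.image P' Finset.univ).card := by
        have := Finset.card_le_card himg
        rwa [Finset.card_insert_of_notMem hjim] at this
      obtain ⟨P'', hsurj'', hle''⟩ := ih P' (by omega)
      exact ⟨P'', hsurj'',
        le_trans (Finset.sum_le_sum (fun i _ => Finset.sum_le_sum (fun i' _ => hpt i i'))) hle''⟩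

lemma group_sum {r s : ℕ} (n : Fin r → ℕ) (P : Fin r → Fin s) :
    (∑ i, ∑ i', if P i ≠ P i' then n i * n i' else 0)
      = 2 * ∑ j : Fin s, ∑ j' : Fin s,
          if j < j' then
            (∑ i ∈ Finset.univ.filter (fun i => P i = j), n i) *
            (∑ i ∈ Finset.univ.filter (fun i => P i = j'), n i)
          else 0 := by
  set N : Fin s → ℕ := fun j => ∑ i ∈ Finset.univ.filter (fun i => P i = j), n i with hN
  have h1 : ∀ i : Fin r, (∑ i', if P i ≠ P i' then n i * n i' else 0)
      = ∑ j' : Fin s, if P i ≠ j' then n i * N j' else 0 := by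
    intro i
    rw [← Finset.sum_fiberwise Finset.univ P (fun i' => if P i ≠ P i' then n i * n i' else 0)]
    refine Finset.sum_congr rfl (fun j' _ => ?_)
    by_cases hij : P i ≠ j'
    · rw [if_pos hij, hN, Finset.mul_sum]
      refine Finset.sum_congr rfl (fun i' hi' => ?_)
      rw [if_pos (by rw [(Finset.mem_filter.1 hi').2]; exact hij)]
    · push_neg at hij
      rw [if_neg (by simpa using hij)]
      refine Finset.sum_eq_zero (fun i' hi' => ?_)
      rw [if_neg (by rw [(Finset.mem_filter.1 hi').2, hij]; simp)]
  have h2 : (∑ i, ∑ i', if P i ≠ P i' then n i * n i' else 0)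
      = ∑ j : Fin s, ∑ j' : Fin s, if j ≠ j' then N j * N j' else 0 := by
    rw [Finset.sum_congr rfl (fun i (_ : i ∈ Finset.univ) => h1 i)]
    rw [← Finset.sum_fiberwise Finset.univ P
      (fun i => ∑ j' : Fin s, if P i ≠ j' then n i * N j' else 0)]
    refine Finset.sum_congr rfl (fun j _ => ?_)
    rw [Finset.sum_comm]
    refine Finset.sum_congr rfl (fun j' _ => ?_)
    by_cases hjj : j ≠ j'
    · rw [if_pos hjj, hN, Finset.sum_mul]
      refine Finset.sum_congr rfl (fun i hi => ?_)
      rw [if_pos (by rw [(Finset.mem_filter.1 hi).2]; exact hjj)]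
    · push_neg at hjj
      rw [if_neg (by simpa using hjj)]
      refine Finset.sum_eq_zero (fun i hi => ?_)
      rw [if_neg (by rw [(Finset.mem_filter.1 hi).2, hjj]; simp)]
  rw [h2]
  have h3 : ∀ j j' : Fin s, (if j ≠ j' then N j * N j' else 0)
      = (if j < j' then N j * N j' else 0) + (if j' < j then N j * N j' else 0) := by
    intro j j'
    rcases lt_trichotomy j j' with h | h | h
    · rw [if_pos h.ne, if_pos h, if_neg (by omega), add_zero]
    · subst h; simp
    · rw [if_pos h.ne', if_neg (by omega), if_pos h, zero_add]
  calc (∑ j : Fin s, ∑ j' : Fin s, if j ≠ j' then N j * N j' else 0)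
      = (∑ j : Fin s, ∑ j' : Fin s, if j < j' then N j * N j' else 0)
        + ∑ j : Fin s, ∑ j' : Fin s, if j' < j then N j * N j' else 0 := by
        rw [← Finset.sum_add_distrib]
        refine Finset.sum_congr rfl (fun j _ => ?_)
        rw [← Finset.sum_add_distrib]
        exact Finset.sum_congr rfl (fun j' _ => h3 j j')
    _ = 2 * ∑ j : Fin s, ∑ j' : Fin s, if j < j' then N j * N j' else 0 := by
        have h4 : (∑ j : Fin s, ∑ j' : Fin s, if j' < j then N j * N j' else 0)
            = ∑ j : Fin s, ∑ j' : Fin s, if j < j' then N j * N j' else 0 := by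
          rw [Finset.sum_comm]
          refine Finset.sum_congr rfl (fun j _ => Finset.sum_congr rfl (fun j' _ => ?_))
          rw [mul_comm]
        rw [h4]; ring

lemma two_mul_edges {V : Type*} [Fintype V] [DecidableEq V] (G : SimpleGraph V)
    [DecidableRel G.Adj] :
    (∑ u : V, ∑ v : V, if G.Adj u v then 1 else 0) = 2 * G.edgeSet.ncard := by
  have h1 : ∀ u : V, (∑ v : V, if G.Adj u v then 1 else 0) = G.degree u := by
    intro u
    rw [← Finset.card_filter, ← SimpleGraph.neighborFinset_eq_filter]
    rfl
  rw [Finset.sum_congr rfl (fun u _ => h1 u), SimpleGraph.sum_degrees_eq_twice_card_edges]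
  congr 1
  rw [Set.ncard_eq_toFinset_card']
  exact congrArg Finset.card (Finset.ext fun e => by simp)

lemma cross_count {r s : ℕ} (n : Fin r → ℕ) (P : Fin r → Fin s) :
    (∑ u : Σ i : Fin r, Fin (n i), ∑ v : Σ i : Fin r, Fin (n i),
      if P u.1 ≠ P v.1 then 1 else 0)
    = ∑ i, ∑ i', if P i ≠ P i' then n i * n i' else 0 := by
  classical
  have hinner : ∀ u : Σ i : Fin r, Fin (n i),
      (∑ v : Σ i : Fin r, Fin (n i), if P u.1 ≠ P v.1 then 1 else 0)
      = ∑ i', if P u.1 ≠ P i' then n i' else 0 := by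
    intro u
    rw [sigma_sum n (fun v => if P u.1 ≠ P v.1 then 1 else 0)]
    refine Finset.sum_congr rfl (fun i' _ => ?_)
    split <;> simp
  rw [Finset.sum_congr rfl (fun u _ => hinner u),
    sigma_sum n (fun u => ∑ i', if P u.1 ≠ P i' then n i' else 0)]
  refine Finset.sum_congr rfl (fun i _ => ?_)
  show (∑ _a : Fin (n i), ∑ i', if P i ≠ P i' then n i' else 0)
      = ∑ i', if P i ≠ P i' then n i * n i' else 0
  rw [Finset.sum_const, Finset.card_univ, Fintype.card_fin, smul_eq_mul, Finset.mul_sum]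
  refine Finset.sum_congr rfl (fun i' _ => ?_)
  split <;> simp

/-- The blow-up of a coloring: the complete multipartite graph induced by `P`. -/
def blowupGraph {r s : ℕ} (n : Fin r → ℕ) (P : Fin r → Fin s) :
    SimpleGraph (Σ i : Fin r, Fin (n i)) where
  Adj u v := P u.1 ≠ P v.1
  symm := ⟨fun u v h => Ne.symm h⟩
  loopless := ⟨fun u h => h rfl⟩

end Aux


/-!
STATEMENT 3: For integers r ≥ t ≥ 2 and positive integers n1, …, nr, the maximum
number of edges of a K_t-free subgraph of the complete r-partite graph
K_{n1,…,nr} equals the maximum, over all partitions 𝒫 of {1,…,r} into t−1 parts,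
of Σ_{I ≠ I' ∈ 𝒫} n_I · n_{I'}, where n_I = Σ_{i∈I} n_i and the sum is over
unordered pairs of distinct parts of 𝒫.

A partition of {1,…,r} into t−1 parts is encoded as a surjection
P : Fin r → Fin (t-1); the part I_j is the preimage of j and
n_{I_j} = Σ_{i : P i = j} n i.  The sum over unordered pairs is the sum over
pairs j < j'.
-/
theorem turan_number_rpartite_Kt
    (r t : ℕ) (ht : 2 ≤ t) (htr : t ≤ r) (n : Fin r → ℕ) (hn : ∀ i, 1 ≤ n i) :
    IsGreatest
      {m : ℕ | ∃ G : SimpleGraph (Σ i : Fin r, Fin (n i)),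
        G ≤ SimpleGraph.completeMultipartiteGraph (fun i : Fin r => Fin (n i)) ∧
        G.CliqueFree t ∧ G.edgeSet.ncard = m}
      (sSup {m : ℕ | ∃ P : Fin r → Fin (t - 1), Function.Surjective P ∧
        m = ∑ j : Fin (t - 1), ∑ j' : Fin (t - 1),
          if j < j' then
            (∑ i ∈ Finset.univ.filter (fun i => P i = j), n i) *
            (∑ i ∈ Finset.univ.filter (fun i => P i = j'), n i)
          else 0}) := by
  classical
  obtain ⟨s, rfl⟩ : ∃ s, t = s + 2 := ⟨t - 2, by omega⟩
  suffices h : IsGreatest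
      {m : ℕ | ∃ G : SimpleGraph (Σ i : Fin r, Fin (n i)),
        G ≤ SimpleGraph.completeMultipartiteGraph (fun i : Fin r => Fin (n i)) ∧
        G.CliqueFree (s + 2) ∧ G.edgeSet.ncard = m}
      (sSup {m : ℕ | ∃ P : Fin r → Fin (s + 1), Function.Surjective P ∧
        m = ∑ j : Fin (s + 1), ∑ j' : Fin (s + 1),
          if j < j' then
            (∑ i ∈ Finset.univ.filter (fun i => P i = j), n i) *
            (∑ i ∈ Finset.univ.filter (fun i => P i = j'), n i)
          else 0}) by exact h
  set S : Set ℕ := {m : ℕ | ∃ P : Fin r → Fin (s + 1), Function.Surjective P ∧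
      m = ∑ j : Fin (s + 1), ∑ j' : Fin (s + 1),
        if j < j' then
          (∑ i ∈ Finset.univ.filter (fun i => P i = j), n i) *
          (∑ i ∈ Finset.univ.filter (fun i => P i = j'), n i)
        else 0} with hS
  have hSne : S.Nonempty := by
    set P0 : Fin r → Fin (s + 1) := fun i => if h : (i : ℕ) < s + 1 then ⟨i, h⟩ else 0 with hP0
    refine ⟨_, P0, ?_, rfl⟩
    intro j
    have hjr : (j : ℕ) < r := lt_of_lt_of_le j.2 (by omega)
    refine ⟨⟨(j : ℕ), hjr⟩, ?_⟩
    have hlt : ((⟨(j : ℕ), hjr⟩ : Fin r) : ℕ) < s + 1 := j.2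
    rw [hP0]
    simp only [dif_pos hlt]
  have hbdd : BddAbove S := by
    refine ⟨(∑ i, n i) * (∑ i, n i), ?_⟩
    rintro m ⟨P, _, rfl⟩
    have h1 : (∑ j : Fin (s + 1), ∑ j' : Fin (s + 1),
        if j < j' then
          (∑ i ∈ Finset.univ.filter (fun i => P i = j), n i) *
          (∑ i ∈ Finset.univ.filter (fun i => P i = j'), n i)
        else 0) ≤ ∑ j : Fin (s + 1), ∑ j' : Fin (s + 1),
        (∑ i ∈ Finset.univ.filter (fun i => P i = j), n i) *
        (∑ i ∈ Finset.univ.filter (fun i => P i = j'), n i) := by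
      refine Finset.sum_le_sum (fun j _ => Finset.sum_le_sum (fun j' _ => ?_))
      split <;> simp
    have h2 : (∑ j : Fin (s + 1), ∑ i ∈ Finset.univ.filter (fun i => P i = j), n i)
        = ∑ i, n i := Finset.sum_fiberwise _ _ _
    refine le_trans h1 (le_of_eq ?_)
    rw [← Finset.sum_mul_sum, h2]
  constructor
  · -- sSup S is achieved by a K_t-free subgraph
    obtain ⟨P, hPsurj, hPval⟩ := Nat.sSup_mem hSne hbdd
    refine ⟨blowupGraph n P, ?_, ?_, ?_⟩
    · intro u v h
      exact fun he => h (congrArg P he)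
    · intro T hT
      have hinj : Set.InjOn (fun u : Σ i : Fin r, Fin (n i) => P u.1) T := by
        intro u hu v hv huv
        by_contra hne
        exact (hT.1 hu hv hne) huv
      have hcle := Finset.card_le_card_of_injOn (fun u : Σ i : Fin r, Fin (n i) => P u.1)
        (fun a _ => Finset.mem_univ _) hinj
      rw [hT.2, Finset.card_univ, Fintype.card_fin] at hcle
      omega
    · have hkey : 2 * (blowupGraph n P).edgeSet.ncard
          = ∑ i, ∑ i', if P i ≠ P i' then n i * n i' else 0 := by
        rw [← cross_count n P]
        refine (two_mul_edges (blowupGraph n P)).symm.trans ?_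
        exact Finset.sum_congr rfl (fun u _ => Finset.sum_congr rfl
          (fun v _ => if_congr Iff.rfl rfl rfl))
      rw [group_sum n P] at hkey
      rw [hPval]
      omega
  · -- upper bound
    rintro m ⟨G, hle, hcf, hcard⟩
    haveI hdec : DecidableRel G.Adj := Classical.decRel _
    have hedge := two_mul_edges G
    obtain ⟨x, hx⟩ := rep n hn G hdec hle
    set φ : Fin r → Σ i : Fin r, Fin (n i) := fun i => ⟨i, x i⟩ with hφ
    have hφinj : Function.Injective φ := by
      intro i i' h
      exact congrArg Sigma.fst h
    set H : SimpleGraph (Fin r) := G.comap φ with hH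
    have hHcf : H.CliqueFree (s + 2) := by
      refine SimpleGraph.CliqueFree.comap ?_ hcf
      exact (SimpleGraph.Embedding.comap ⟨φ, hφinj⟩ G).isContained
    have hHcfo : H.CliqueFreeOn ((Finset.univ : Finset (Fin r)) : Set (Fin r)) (s + 2) := by
      rw [Finset.coe_univ]
      exact (SimpleGraph.cliqueFreeOn_univ H).2 hHcf
    obtain ⟨P, hP⟩ := lemW n s H inferInstance Finset.univ hHcfo
    have hGP : (∑ i, ∑ i', if G.Adj ⟨i, x i⟩ ⟨i', x i'⟩ then n i * n i' else 0)
        ≤ ∑ i, ∑ i', if P i ≠ P i' then n i * n i' else 0 := by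
      refine le_trans (le_of_eq ?_) hP
      exact Finset.sum_congr rfl (fun i _ => Finset.sum_congr rfl
        (fun i' _ => if_congr Iff.rfl rfl rfl))
    obtain ⟨P', hP'surj, hP'⟩ := surjectivize (by omega : s + 1 ≤ r) n P
    have hval' := group_sum n P'
    have hchain : 2 * m ≤ 2 * ∑ j : Fin (s + 1), ∑ j' : Fin (s + 1),
        if j < j' then
          (∑ i ∈ Finset.univ.filter (fun i => P' i = j), n i) *
          (∑ i ∈ Finset.univ.filter (fun i => P' i = j'), n i)
        else 0 := by
      calc 2 * m = 2 * G.edgeSet.ncard := by rw [hcard]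
        _ = ∑ u : Σ i : Fin r, Fin (n i), ∑ v : Σ i : Fin r, Fin (n i),
              if G.Adj u v then 1 else 0 := hedge.symm
        _ ≤ ∑ i, ∑ i', if G.Adj ⟨i, x i⟩ ⟨i', x i'⟩ then n i * n i' else 0 := hx
        _ ≤ ∑ i, ∑ i', if P i ≠ P i' then n i * n i' else 0 := hGP
        _ ≤ ∑ i, ∑ i', if P' i ≠ P' i' then n i * n i' else 0 := hP'
        _ = _ := hval'
    have hm : m ≤ ∑ j : Fin (s + 1), ∑ j' : Fin (s + 1),
        if j < j' then
          (∑ i ∈ Finset.univ.filter (fun i => P' i = j), n i) *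
          (∑ i ∈ Finset.univ.filter (fun i => P' i = j'), n i)
        else 0 := by omega
    exact le_trans hm (le_csSup hbdd ⟨P', hP'surj, rfl⟩)
end

section
/- Let G be a 4-partite graph with parts V1, V2, V3, V4 of sizes n1, n2, n3, n4, and let x ∈ V1 and y ∈ V2. If x and y have no common neighbor and d(x) + d(y) = n1 + n2 + n3 + n4, then xy is an edge of G, every vertex of V2 is adjacent to x, and every vertex of V1 is adjacent to y. -/
/-!
STATEMENT 5: Let G be a 4-partite graph with parts V1, V2, V3, V4 of sizes
n1, n2, n3, n4, and let x ∈ V1 and y ∈ V2. If x and y have no common neighbor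
and d(x) + d(y) = n1 + n2 + n3 + n4, then xy is an edge of G, every vertex of
V2 is adjacent to x, and every vertex of V1 is adjacent to y.
-/
theorem no_common_neighbor_degree_sum_eq
    (V : Type) [Fintype V] [DecidableEq V]
    (G : SimpleGraph V) [DecidableRel G.Adj]
    (Vp : Fin 4 → Finset V) (n : Fin 4 → ℕ)
    (hdisj : ∀ i j : Fin 4, i ≠ j → Disjoint (Vp i) (Vp j))
    (hcover : ∀ v : V, ∃ i, v ∈ Vp i)
    (hcard : ∀ i, (Vp i).card = n i)
    (hpartite : ∀ u v : V, G.Adj u v → ∀ i, u ∈ Vp i → v ∈ Vp i → False)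
    (x y : V) (hx : x ∈ Vp 0) (hy : y ∈ Vp 1)
    -- x and y have no common neighbor
    (hcom : ∀ z : V, ¬ (G.Adj x z ∧ G.Adj y z))
    (hdeg : G.degree x + G.degree y = n 0 + n 1 + n 2 + n 3) :
    G.Adj x y ∧ (∀ v ∈ Vp 1, G.Adj x v) ∧ (∀ v ∈ Vp 0, G.Adj y v) := by
  classical
  set A := G.neighborFinset x
  set B := G.neighborFinset y
  have hAB : Disjoint A B := by
    rw [Finset.disjoint_left]
    intro z hzA hzB
    exact hcom z ⟨(G.mem_neighborFinset x z).1 hzA, (G.mem_neighborFinset y z).1 hzB⟩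
  have huniv : (Vp 0 ∪ Vp 1 ∪ Vp 2 ∪ Vp 3) = (Finset.univ : Finset V) := by
    apply Finset.eq_univ_of_forall
    intro v
    obtain ⟨i, hi⟩ := hcover v
    fin_cases i <;> simp_all [Finset.mem_union]
  have hcardU : Fintype.card V = n 0 + n 1 + n 2 + n 3 := by
    rw [← Finset.card_univ, ← huniv]
    rw [Finset.card_union_of_disjoint, Finset.card_union_of_disjoint,
        Finset.card_union_of_disjoint, hcard, hcard, hcard, hcard]
    · exact hdisj 0 1 (by decide)
    · exact Finset.disjoint_union_left.2 ⟨hdisj 0 2 (by decide), hdisj 1 2 (by decide)⟩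
    · exact Finset.disjoint_union_left.2 ⟨Finset.disjoint_union_left.2
        ⟨hdisj 0 3 (by decide), hdisj 1 3 (by decide)⟩, hdisj 2 3 (by decide)⟩
  have hcards : (A ∪ B).card = Fintype.card V := by
    rw [Finset.card_union_of_disjoint hAB, hcardU]
    simpa [A, B] using hdeg
  have hall : ∀ v : V, G.Adj x v ∨ G.Adj y v := by
    intro v
    have : A ∪ B = Finset.univ :=
      Finset.eq_univ_of_card _ hcards
    have hv : v ∈ A ∪ B := this ▸ Finset.mem_univ v
    rcases Finset.mem_union.1 hv with h | h
    · exact Or.inl ((G.mem_neighborFinset x v).1 h)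
    · exact Or.inr ((G.mem_neighborFinset y v).1 h)
  have h1 : ∀ v ∈ Vp 1, G.Adj x v := by
    intro v hv
    rcases hall v with h | h
    · exact h
    · exact absurd h (fun h => hpartite y v h 1 hy hv)
  have h0 : ∀ v ∈ Vp 0, G.Adj y v := by
    intro v hv
    rcases hall v with h | h
    · exact absurd h (fun h => hpartite x v h 0 hx hv)
    · exact h
  exact ⟨h1 y hy, h1, h0⟩
end

section
/- (Progressive induction) For each n ∈ ℕ let 𝔄_n be a finite set, with 𝔄_n ∩ 𝔄_m = ∅ whenever n ≠ m, and let 𝔄 = ⋃_{n≥1} 𝔄_n. Let B be a property (predicate) on 𝔄 and let Δ : 𝔄 → ℕ be a function such that (a) Δ(a) = 0 whenever a satisfies B, and (b) there is an M0 such that for every n > M0 and every a ∈ 𝔄_n, either a satisfies B or there exist n' with n/2 < n' < n and a' ∈ 𝔄_{n'} such that Δ(a) < Δ(a'). Then there exists n0 such that for every n > n0, every a ∈ 𝔄_n satisfies B. -/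
/-!
STATEMENT 6 (Progressive induction): For each n ∈ ℕ let 𝔄_n be a finite set,
with 𝔄_n ∩ 𝔄_m = ∅ whenever n ≠ m, and let 𝔄 = ⋃_{n≥1} 𝔄_n. Let B be a property
on 𝔄 and let Δ : 𝔄 → ℕ be a function such that
(a) Δ(a) = 0 whenever a satisfies B, and
(b) there is an M0 such that for every n > M0 and every a ∈ 𝔄_n, either a
satisfies B or there exist n' with n/2 < n' < n and a' ∈ 𝔄_{n'} with Δ(a) < Δ(a').
Then there exists n0 such that for every n > n0, every a ∈ 𝔄_n satisfies B.

The condition n/2 < n' is stated as n < 2 * n'.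
-/
theorem progressive_induction
    (α : Type) (A : ℕ → Set α)
    (hfin : ∀ n : ℕ, (A n).Finite)
    (hdisj : ∀ m n : ℕ, m ≠ n → Disjoint (A m) (A n))
    (B : α → Prop) (Δ : α → ℕ)
    (ha : ∀ n : ℕ, 1 ≤ n → ∀ a ∈ A n, B a → Δ a = 0)
    (hb : ∃ M0 : ℕ, ∀ n : ℕ, M0 < n → ∀ a ∈ A n,
      B a ∨ ∃ n' : ℕ, n < 2 * n' ∧ n' < n ∧ ∃ a' ∈ A n', Δ a < Δ a') :
    ∃ n0 : ℕ, ∀ n : ℕ, n0 < n → ∀ a ∈ A n, B a := by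
  obtain ⟨M0, hM0⟩ := hb
  set K := Finset.sup (Finset.range (M0+1)) (fun m => (hfin m).toFinset.sup Δ) with hK
  have hKb : ∀ m, m ≤ M0 → ∀ b ∈ A m, Δ b ≤ K := by
    intro m hm b hbm
    calc Δ b ≤ (hfin m).toFinset.sup Δ :=
          Finset.le_sup ((hfin m).mem_toFinset.mpr hbm)
      _ ≤ K := by
          have hmem : m ∈ Finset.range (M0+1) := Finset.mem_range.mpr (by omega)
          exact Finset.le_sup (f := fun m => (hfin m).toFinset.sup Δ) hmem
  have key : ∀ n, M0 < n → ∀ a ∈ A n, ¬ B a →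
      ∃ m, m ≤ M0 ∧ ∃ b ∈ A m, Δ a < Δ b ∧ n < 2 ^ (Δ b - Δ a) * m := by
    intro n
    induction n using Nat.strong_induction_on with
    | _ n ih =>
      intro hn a haA hnB
      rcases hM0 n hn a haA with hB | ⟨n', h1, h2, a', ha'A, hΔ⟩
      · exact absurd hB hnB
      by_cases hn' : n' ≤ M0
      · refine ⟨n', hn', a', ha'A, hΔ, ?_⟩
        have h2pow : 2 ≤ 2 ^ (Δ a' - Δ a) := by
          calc 2 = 2^1 := rfl
            _ ≤ 2 ^ (Δ a' - Δ a) := Nat.pow_le_pow_right (by norm_num) (by omega)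
        calc n < 2 * n' := h1
          _ ≤ 2 ^ (Δ a' - Δ a) * n' := Nat.mul_le_mul_right _ h2pow
      · have hn'1 : 1 ≤ n' := by omega
        have hnB' : ¬ B a' := fun hB' => by
          have := ha n' hn'1 a' ha'A hB'; omega
        obtain ⟨m, hm, b, hbA, hΔb, hbnd⟩ := ih n' h2 (by omega) a' ha'A hnB'
        refine ⟨m, hm, b, hbA, by omega, ?_⟩
        calc n < 2 * n' := h1
          _ < 2 * (2 ^ (Δ b - Δ a') * m) := by omega
          _ = 2 ^ (Δ b - Δ a' + 1) * m := by ring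
          _ ≤ 2 ^ (Δ b - Δ a) * m :=
              Nat.mul_le_mul_right _ (Nat.pow_le_pow_right (by norm_num) (by omega))
  refine ⟨2 ^ K * M0 + M0, fun n hn a haA => ?_⟩
  by_contra hnB
  obtain ⟨m, hm, b, hbA, _, hbnd⟩ := key n (by omega) a haA hnB
  have h1 : Δ b ≤ K := hKb m hm b hbA
  have h2 : 2 ^ (Δ b - Δ a) * m ≤ 2 ^ K * M0 :=
    Nat.mul_le_mul (Nat.pow_le_pow_right (by norm_num) (by omega)) hm
  omega
end

section
/- Let k ≥ 1 and n1 ≥ n2 ≥ n3 ≥ n4 ≥ k be integers, and let V1, V2, V3, V4 be disjoint sets with |Vi| = ni. Fix a set Z ⊆ V4 with |Z| = k−1, and let G1 be the 4-partite graph consisting of all edges between V1 ∪ V4 and V2 ∪ V3 together with all edges between Z and V1. Then G1 contains no k pairwise vertex-disjoint triangles, and e(G1) = (n1+n4)(n2+n3) + (k−1)n1. -/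
/-!
STATEMENT 7: Let k ≥ 1 and n1 ≥ n2 ≥ n3 ≥ n4 ≥ k be integers, and let
V1, V2, V3, V4 be disjoint sets with |Vi| = ni. Fix a set Z ⊆ V4 with
|Z| = k−1, and let G1 be the 4-partite graph consisting of all edges between
V1 ∪ V4 and V2 ∪ V3 together with all edges between Z and V1. Then G1 contains
no k pairwise vertex-disjoint triangles, and
e(G1) = (n1+n4)(n2+n3) + (k−1)n1.

Here `Vp 0, Vp 1, Vp 2, Vp 3` play the roles of V1, V2, V3, V4 and
`n 0 ≥ n 1 ≥ n 2 ≥ n 3 ≥ k` are their sizes.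
-/
theorem extremal_construction_G1
    (k : ℕ) (hk : 1 ≤ k) (n : Fin 4 → ℕ)
    (h43 : k ≤ n 3) (h32 : n 3 ≤ n 2) (h21 : n 2 ≤ n 1) (h10 : n 1 ≤ n 0)
    (V : Type) [Fintype V] [DecidableEq V]
    (Vp : Fin 4 → Finset V)
    (hdisj : ∀ i j : Fin 4, i ≠ j → Disjoint (Vp i) (Vp j))
    (hcover : ∀ v : V, ∃ i, v ∈ Vp i)
    (hcard : ∀ i, (Vp i).card = n i)
    (Z : Finset V) (hZ : Z ⊆ Vp 3) (hZcard : Z.card = k - 1)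
    (G : SimpleGraph V)
    -- G = G1: all edges between V1 ∪ V4 and V2 ∪ V3, plus all edges between Z and V1
    (hG : ∀ u v : V, G.Adj u v ↔
      ((u ∈ Vp 0 ∪ Vp 3 ∧ v ∈ Vp 1 ∪ Vp 2) ∨ (v ∈ Vp 0 ∪ Vp 3 ∧ u ∈ Vp 1 ∪ Vp 2) ∨
       (u ∈ Z ∧ v ∈ Vp 0) ∨ (v ∈ Z ∧ u ∈ Vp 0))) :
    (¬ ∃ S : Finset (Finset V), S.card = k ∧ (∀ T ∈ S, G.IsNClique 3 T) ∧
        (S : Set (Finset V)).Pairwise Disjoint) ∧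
    G.edgeSet.ncard = (n 0 + n 3) * (n 1 + n 2) + (k - 1) * n 0 := by
  classical
  set A : Finset V := Vp 0 ∪ Vp 3 with hA
  set B : Finset V := Vp 1 ∪ Vp 2 with hB
  have hAB : Disjoint A B := by
    rw [hA, hB]
    exact Finset.disjoint_union_left.mpr
      ⟨Finset.disjoint_union_right.mpr ⟨hdisj 0 1 (by decide), hdisj 0 2 (by decide)⟩,
       Finset.disjoint_union_right.mpr ⟨hdisj 3 1 (by decide), hdisj 3 2 (by decide)⟩⟩
  have hnotAB : ∀ x : V, x ∈ A → x ∈ B → False :=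
    fun x hx hx' => Finset.disjoint_left.mp hAB hx hx'
  have hmemAB : ∀ v : V, v ∈ A ∨ v ∈ B := by
    intro v
    obtain ⟨i, hi⟩ := hcover v
    fin_cases i
    · exact Or.inl (Finset.mem_union_left _ hi)
    · exact Or.inr (Finset.mem_union_left _ hi)
    · exact Or.inr (Finset.mem_union_right _ hi)
    · exact Or.inl (Finset.mem_union_right _ hi)
  have hZA : ∀ z ∈ Z, z ∈ A := fun z hz => Finset.mem_union_right _ (hZ hz)
  have hV0A : ∀ v ∈ Vp 0, v ∈ A := fun v hv => Finset.mem_union_left _ hv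
  have cross : ∀ u v : V, G.Adj u v → u ∉ Z → v ∉ Z →
      ((u ∈ A ∧ v ∈ B) ∨ (u ∈ B ∧ v ∈ A)) := by
    intro u v hadj hu hv
    rw [hG] at hadj
    rcases hadj with h | h | h | h
    · exact Or.inl h
    · exact Or.inr ⟨h.2, h.1⟩
    · exact absurd h.1 hu
    · exact absurd h.1 hv
  constructor
  · rintro ⟨S, hScard, hSclique, hSdisj⟩
    have htri : ∀ T ∈ S, ∃ z, z ∈ T ∧ z ∈ Z := by
      intro T hT
      by_contra hcon
      push_neg at hcon
      obtain ⟨hcl, hc3⟩ := hSclique T hT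
      obtain ⟨a, b, c, hab, hac, hbc, hTeq⟩ := Finset.card_eq_three.mp hc3
      have ha : a ∈ T := by simp [hTeq]
      have hb : b ∈ T := by simp [hTeq]
      have hc : c ∈ T := by simp [hTeq]
      have h1 := cross a b (hcl ha hb hab) (hcon a ha) (hcon b hb)
      have h2 := cross a c (hcl ha hc hac) (hcon a ha) (hcon c hc)
      have h3 := cross b c (hcl hb hc hbc) (hcon b hb) (hcon c hc)
      rcases h1 with ⟨x1, x2⟩ | ⟨x1, x2⟩ <;>
        rcases h2 with ⟨y1, y2⟩ | ⟨y1, y2⟩ <;>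
        rcases h3 with ⟨z1, z2⟩ | ⟨z1, z2⟩ <;>
        first
          | exact hnotAB a x1 y1 | exact hnotAB a y1 x1
          | exact hnotAB b z1 x2 | exact hnotAB b x2 z1
          | exact hnotAB c y2 z2 | exact hnotAB c z2 y2
    have hSne : S.Nonempty := by
      rw [← Finset.card_pos, hScard]; exact hk
    obtain ⟨T0, hT0⟩ := hSne
    obtain ⟨z0, _, hz0Z⟩ := htri T0 hT0
    let f : Finset V → V := fun T => if h : (T ∩ Z).Nonempty then h.choose else z0
    have hmaps : ∀ T ∈ S, f T ∈ Z := by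
      intro T hT
      obtain ⟨z, hzT, hzZ⟩ := htri T hT
      have hne : (T ∩ Z).Nonempty := ⟨z, Finset.mem_inter.mpr ⟨hzT, hzZ⟩⟩
      simp only [f, dif_pos hne]
      exact (Finset.mem_inter.mp hne.choose_spec).2
    have hfinT : ∀ T ∈ S, f T ∈ T := by
      intro T hT
      obtain ⟨z, hzT, hzZ⟩ := htri T hT
      have hne : (T ∩ Z).Nonempty := ⟨z, Finset.mem_inter.mpr ⟨hzT, hzZ⟩⟩
      simp only [f, dif_pos hne]
      exact (Finset.mem_inter.mp hne.choose_spec).1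
    have hlt : Z.card < S.card := by
      rw [hScard, hZcard]; omega
    obtain ⟨T1, hT1, T2, hT2, hne12, hfeq⟩ :=
      Finset.exists_ne_map_eq_of_card_lt_of_maps_to hlt hmaps
    have hd := hSdisj hT1 hT2 hne12
    exact Finset.disjoint_left.mp hd (hfinT T1 hT1) (hfeq ▸ hfinT T2 hT2)
  · -- edge count
    set E : Finset (Sym2 V) :=
      (A ×ˢ B).image (fun p => s(p.1, p.2)) ∪
      (Z ×ˢ Vp 0).image (fun p => s(p.1, p.2)) with hE
    have hEset : G.edgeSet = ↑E := by
      ext e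
      induction e with
      | _ u v =>
        simp only [SimpleGraph.mem_edgeSet, hG, hE, Finset.coe_union, Set.mem_union,
          Finset.coe_image, Set.mem_image, Finset.mem_coe, Finset.mem_product,
          Prod.exists]
        constructor
        · rintro (⟨h1, h2⟩ | ⟨h1, h2⟩ | ⟨h1, h2⟩ | ⟨h1, h2⟩)
          · exact Or.inl ⟨u, v, ⟨h1, h2⟩, rfl⟩
          · exact Or.inl ⟨v, u, ⟨h1, h2⟩, Sym2.eq_swap⟩
          · exact Or.inr ⟨u, v, ⟨h1, h2⟩, rfl⟩
          · exact Or.inr ⟨v, u, ⟨h1, h2⟩, Sym2.eq_swap⟩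
        · rintro (⟨a, b, ⟨ha, hb⟩, heq⟩ | ⟨a, b, ⟨ha, hb⟩, heq⟩) <;>
            rcases Sym2.eq_iff.mp heq with ⟨rfl, rfl⟩ | ⟨rfl, rfl⟩
          · exact Or.inl ⟨ha, hb⟩
          · exact Or.inr (Or.inl ⟨ha, hb⟩)
          · exact Or.inr (Or.inr (Or.inl ⟨ha, hb⟩))
          · exact Or.inr (Or.inr (Or.inr ⟨ha, hb⟩))
    rw [hEset, Set.ncard_coe_finset]
    have hdisjE : Disjoint ((A ×ˢ B).image (fun p => s(p.1, p.2)))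
        ((Z ×ˢ Vp 0).image (fun p => s(p.1, p.2))) := by
      rw [Finset.disjoint_left]
      rintro e he1 he2
      simp only [Finset.mem_image, Finset.mem_product, Prod.exists] at he1 he2
      obtain ⟨a, b, ⟨ha, hb⟩, rfl⟩ := he1
      obtain ⟨z, w, ⟨hz, hw⟩, heq⟩ := he2
      rcases Sym2.eq_iff.mp heq with ⟨h1, h2⟩ | ⟨h1, h2⟩
      · exact hnotAB w (hV0A w hw) (h2 ▸ hb)
      · exact hnotAB z (hZA z hz) (h1 ▸ hb)
    have hinj1 : Set.InjOn (fun p : V × V => s(p.1, p.2)) ↑(A ×ˢ B) := by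
      rintro ⟨a, b⟩ hp ⟨c, d⟩ hq heq
      simp only [Finset.coe_product, Set.mem_prod, Finset.mem_coe] at hp hq
      rcases Sym2.eq_iff.mp heq with ⟨h1, h2⟩ | ⟨h1, h2⟩
      · exact Prod.ext h1 h2
      · exact (hnotAB a hp.1 (by simpa [show a = d from h1] using hq.2)).elim
    have hinj2 : Set.InjOn (fun p : V × V => s(p.1, p.2)) ↑(Z ×ˢ Vp 0) := by
      rintro ⟨a, b⟩ hp ⟨c, d⟩ hq heq
      simp only [Finset.coe_product, Set.mem_prod, Finset.mem_coe] at hp hq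
      rcases Sym2.eq_iff.mp heq with ⟨h1, h2⟩ | ⟨h1, h2⟩
      · exact Prod.ext h1 h2
      · exact (Finset.disjoint_left.mp (hdisj 3 0 (by decide)) (hZ hp.1) (by simpa [show a = d from h1] using hq.2)).elim
    have hcardA : A.card = n 0 + n 3 := by
      rw [hA, Finset.card_union_of_disjoint (hdisj 0 3 (by decide)), hcard, hcard]
    have hcardB : B.card = n 1 + n 2 := by
      rw [hB, Finset.card_union_of_disjoint (hdisj 1 2 (by decide)), hcard, hcard]
    rw [hE, Finset.card_union_of_disjoint hdisjE,
      Finset.card_image_of_injOn hinj1, Finset.card_image_of_injOn hinj2,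
      Finset.card_product, Finset.card_product, hcardA, hcardB, hZcard, hcard]
end

section
/- Let k ≥ 1 and n1 ≥ n2 ≥ n3 ≥ n4 ≥ k be integers, and let V1, V2, V3, V4 be disjoint sets with |Vi| = ni. Fix a set Z ⊆ V4 with |Z| = k−1, and let G2 be the 4-partite graph consisting of all edges between V1 and V2 ∪ V3 ∪ V4 together with all edges between Z and V2 ∪ V3. Then G2 contains no k pairwise vertex-disjoint triangles, and e(G2) = n1(n2+n3+n4) + (k−1)(n2+n3). -/
/-!
STATEMENT 8: Let k ≥ 1 and n1 ≥ n2 ≥ n3 ≥ n4 ≥ k be integers, and let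
V1, V2, V3, V4 be disjoint sets with |Vi| = ni. Fix a set Z ⊆ V4 with
|Z| = k−1, and let G2 be the 4-partite graph consisting of all edges between
V1 and V2 ∪ V3 ∪ V4 together with all edges between Z and V2 ∪ V3. Then G2
contains no k pairwise vertex-disjoint triangles, and
e(G2) = n1(n2+n3+n4) + (k−1)(n2+n3).

Here `Vp 0, Vp 1, Vp 2, Vp 3` play the roles of V1, V2, V3, V4 and
`n 0 ≥ n 1 ≥ n 2 ≥ n 3 ≥ k` are their sizes.
-/
theorem extremal_construction_G2
    (k : ℕ) (hk : 1 ≤ k) (n : Fin 4 → ℕ)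
    (h43 : k ≤ n 3) (h32 : n 3 ≤ n 2) (h21 : n 2 ≤ n 1) (h10 : n 1 ≤ n 0)
    (V : Type) [Fintype V] [DecidableEq V]
    (Vp : Fin 4 → Finset V)
    (hdisj : ∀ i j : Fin 4, i ≠ j → Disjoint (Vp i) (Vp j))
    (hcover : ∀ v : V, ∃ i, v ∈ Vp i)
    (hcard : ∀ i, (Vp i).card = n i)
    (Z : Finset V) (hZ : Z ⊆ Vp 3) (hZcard : Z.card = k - 1)
    (G : SimpleGraph V)
    -- G = G2: all edges between V1 and V2 ∪ V3 ∪ V4, plus all edges between Z and V2 ∪ V3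
    (hG : ∀ u v : V, G.Adj u v ↔
      ((u ∈ Vp 0 ∧ v ∈ Vp 1 ∪ Vp 2 ∪ Vp 3) ∨ (v ∈ Vp 0 ∧ u ∈ Vp 1 ∪ Vp 2 ∪ Vp 3) ∨
       (u ∈ Z ∧ v ∈ Vp 1 ∪ Vp 2) ∨ (v ∈ Z ∧ u ∈ Vp 1 ∪ Vp 2))) :
    (¬ ∃ S : Finset (Finset V), S.card = k ∧ (∀ T ∈ S, G.IsNClique 3 T) ∧
        (S : Set (Finset V)).Pairwise Disjoint) ∧
    G.edgeSet.ncard = n 0 * (n 1 + n 2 + n 3) + (k - 1) * (n 1 + n 2) := by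
  
  classical
  -- helper disjointness facts
  have hd : ∀ (i j : Fin 4), i ≠ j → ∀ v : V, v ∈ Vp i → v ∈ Vp j → False := by
    intro i j hij v hvi hvj
    exact Finset.disjoint_left.mp (hdisj i j hij) hvi hvj
  have h0A : ∀ v : V, v ∈ Vp 0 → v ∈ Vp 1 ∪ Vp 2 ∪ Vp 3 → False := by
    intro v h0 hA
    simp only [Finset.mem_union] at hA
    rcases hA with (h | h) | h
    · exact hd 0 1 (by decide) v h0 h
    · exact hd 0 2 (by decide) v h0 h
    · exact hd 0 3 (by decide) v h0 h
  have h0B : ∀ v : V, v ∈ Vp 0 → v ∈ Vp 1 ∪ Vp 2 → False := by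
    intro v h0 hB
    simp only [Finset.mem_union] at hB
    rcases hB with h | h
    · exact hd 0 1 (by decide) v h0 h
    · exact hd 0 2 (by decide) v h0 h
  have hZB : ∀ v : V, v ∈ Z → v ∈ Vp 1 ∪ Vp 2 → False := by
    intro v hz hB
    simp only [Finset.mem_union] at hB
    rcases hB with h | h
    · exact hd 3 1 (by decide) v (hZ hz) h
    · exact hd 3 2 (by decide) v (hZ hz) h
  have h0Z : ∀ v : V, v ∈ Vp 0 → v ∈ Z → False := by
    intro v h0 hz
    exact hd 0 3 (by decide) v h0 (hZ hz)
  constructor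
  · rintro ⟨S, hScard, hStri, hSdisj⟩
    -- every triangle meets Z
    have key : ∀ u v : V, G.Adj u v → u ∉ Z → v ∉ Z →
        (u ∈ Vp 0 ∧ v ∈ Vp 1 ∪ Vp 2 ∪ Vp 3) ∨ (v ∈ Vp 0 ∧ u ∈ Vp 1 ∪ Vp 2 ∪ Vp 3) := by
      intro u v hadj hu hv
      rcases (hG u v).mp hadj with h | h | h | h <;> tauto
    have hne : ∀ T ∈ S, (T ∩ Z).Nonempty := by
      intro T hT
      obtain ⟨hclique, hcard3⟩ := hStri T hT
      obtain ⟨a, b, c, hab, hac, hbc, rfl⟩ := Finset.card_eq_three.mp hcard3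
      by_contra hempty
      rw [Finset.not_nonempty_iff_eq_empty, Finset.eq_empty_iff_forall_notMem] at hempty
      have haZ : a ∉ Z := fun h => hempty a (Finset.mem_inter.mpr ⟨by simp, h⟩)
      have hbZ : b ∉ Z := fun h => hempty b (Finset.mem_inter.mpr ⟨by simp, h⟩)
      have hcZ : c ∉ Z := fun h => hempty c (Finset.mem_inter.mpr ⟨by simp, h⟩)
      have adjab : G.Adj a b := hclique (by simp) (by simp) hab
      have adjac : G.Adj a c := hclique (by simp) (by simp) hac
      have adjbc : G.Adj b c := hclique (by simp) (by simp) hbc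
      have e1 := key a b adjab haZ hbZ
      have e2 := key a c adjac haZ hcZ
      have e3 := key b c adjbc hbZ hcZ
      have Ha := h0A a; have Hb := h0A b; have Hc := h0A c
      tauto
    have hVne : Nonempty V := by
      have h3 : 0 < (Vp 3).card := by rw [hcard]; omega
      obtain ⟨v, _⟩ := Finset.card_pos.mp h3
      exact ⟨v⟩
    let f : Finset V → V := fun T => if h : (T ∩ Z).Nonempty then h.choose else Classical.arbitrary V
    have hfmem : ∀ T ∈ S, f T ∈ T ∩ Z := by
      intro T hT
      simp only [f, dif_pos (hne T hT)]
      exact (hne T hT).choose_spec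
    have hcardle : S.card ≤ Z.card := by
      apply Finset.card_le_card_of_injOn f
      · intro T hT
        exact (Finset.mem_inter.mp (hfmem T hT)).2
      · intro T1 h1 T2 h2 heq
        by_contra hneq
        have hdd := hSdisj h1 h2 hneq
        have m1 : f T1 ∈ T1 := (Finset.mem_inter.mp (hfmem T1 h1)).1
        have m2 : f T2 ∈ T2 := (Finset.mem_inter.mp (hfmem T2 h2)).1
        rw [← heq] at m2
        exact Finset.disjoint_left.mp hdd m1 m2
    omega
  · -- edge count
    have hAcard : (Vp 1 ∪ Vp 2 ∪ Vp 3).card = n 1 + n 2 + n 3 := by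
      rw [Finset.card_union_of_disjoint, Finset.card_union_of_disjoint (hdisj 1 2 (by decide)),
        hcard, hcard, hcard]
      exact Finset.disjoint_union_left.mpr ⟨hdisj 1 3 (by decide), hdisj 2 3 (by decide)⟩
    have hBcard : (Vp 1 ∪ Vp 2).card = n 1 + n 2 := by
      rw [Finset.card_union_of_disjoint (hdisj 1 2 (by decide)), hcard, hcard]
    set F : Finset (V × V) := (Vp 0 ×ˢ (Vp 1 ∪ Vp 2 ∪ Vp 3)) ∪ (Z ×ˢ (Vp 1 ∪ Vp 2)) with hF
    have hedge : G.edgeSet = ↑(F.image fun p => s(p.1, p.2)) := by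
      ext e
      induction e using Sym2.ind with
      | _ u v =>
        simp only [SimpleGraph.mem_edgeSet, Finset.coe_image, Set.mem_image, Finset.mem_coe]
        constructor
        · intro h
          rcases (hG u v).mp h with ⟨h1, h2⟩ | ⟨h1, h2⟩ | ⟨h1, h2⟩ | ⟨h1, h2⟩
          · exact ⟨(u, v), Finset.mem_union_left _ (Finset.mem_product.mpr ⟨h1, h2⟩), rfl⟩
          · exact ⟨(v, u), Finset.mem_union_left _ (Finset.mem_product.mpr ⟨h1, h2⟩), Sym2.eq_swap⟩
          · exact ⟨(u, v), Finset.mem_union_right _ (Finset.mem_product.mpr ⟨h1, h2⟩), rfl⟩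
          · exact ⟨(v, u), Finset.mem_union_right _ (Finset.mem_product.mpr ⟨h1, h2⟩), Sym2.eq_swap⟩
        · rintro ⟨⟨p1, p2⟩, hp, heq⟩
          rw [hF, Finset.mem_union, Finset.mem_product, Finset.mem_product] at hp
          rw [Sym2.eq_iff] at heq
          rw [hG u v]
          rcases heq with ⟨rfl, rfl⟩ | ⟨rfl, rfl⟩ <;> tauto
    have hinj : Set.InjOn (fun p : V × V => s(p.1, p.2)) ↑F := by
      rintro ⟨a, b⟩ hp ⟨c, d⟩ hq heq
      rw [Finset.mem_coe, hF, Finset.mem_union, Finset.mem_product, Finset.mem_product] at hp hq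
      simp only [Sym2.eq_iff] at heq
      rcases heq with ⟨rfl, rfl⟩ | ⟨rfl, rfl⟩
      · rfl
      · exfalso
        rcases hp with ⟨h1, h2⟩ | ⟨h1, h2⟩ <;> rcases hq with ⟨h3, h4⟩ | ⟨h3, h4⟩
        · exact h0A a h1 h4
        · exact h0B a h1 h4
        · exact h0B b h3 h2
        · exact hZB a h1 h4
    have hdisjF : Disjoint ((Vp 0) ×ˢ (Vp 1 ∪ Vp 2 ∪ Vp 3)) (Z ×ˢ (Vp 1 ∪ Vp 2)) := by
      rw [Finset.disjoint_left]
      rintro ⟨a, b⟩ h1 h2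
      rw [Finset.mem_product] at h1 h2
      exact h0Z a h1.1 h2.1
    rw [hedge, Set.ncard_coe_finset, Finset.card_image_of_injOn hinj, hF,
      Finset.card_union_of_disjoint hdisjF, Finset.card_product, Finset.card_product,
      hAcard, hBcard, hcard, hZcard]
end

section
/- Let k ≥ 1 and let G be a 4-partite graph with parts V1, V2, V3, V4 that contains no k pairwise vertex-disjoint triangles. Call an edge xy of G rich if x and y have at least k common neighbors lying in a single part of G. Then G does not contain k pairwise disjoint rich edges (i.e., the graph formed by the rich edges has no matching of size k). -/
/-!
STATEMENT 10: Let k ≥ 1 and let G be a 4-partite graph with parts V1, V2, V3, V4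
that contains no k pairwise vertex-disjoint triangles. Call an edge xy of G rich
if x and y have at least k common neighbors lying in a single part of G. Then G
does not contain k pairwise disjoint rich edges (i.e., the graph formed by the
rich edges has no matching of size k).
-/
theorem rich_edges_no_matching
    (k : ℕ) (hk : 1 ≤ k)
    (V : Type) [Fintype V] [DecidableEq V]
    (G : SimpleGraph V) [DecidableRel G.Adj]
    (Vp : Fin 4 → Finset V)
    (hdisj : ∀ i j : Fin 4, i ≠ j → Disjoint (Vp i) (Vp j))
    (hcover : ∀ v : V, ∃ i, v ∈ Vp i)
    (hpartite : ∀ u v : V, G.Adj u v → ∀ i, u ∈ Vp i → v ∈ Vp i → False)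
    -- G contains no k pairwise vertex-disjoint triangles
    (hfree : ¬ ∃ S : Finset (Finset V), S.card = k ∧ (∀ T ∈ S, G.IsNClique 3 T) ∧
        (S : Set (Finset V)).Pairwise Disjoint) :
    -- no k pairwise disjoint rich edges
    ¬ ∃ e : Fin k → V × V,
      (∀ i : Fin k, G.Adj (e i).1 (e i).2 ∧
        ∃ p : Fin 4, k ≤ ((G.neighborFinset (e i).1 ∩ G.neighborFinset (e i).2) ∩ Vp p).card) ∧
      (∀ i j : Fin k, i ≠ j →
        ({(e i).1, (e i).2} : Set V) ∩ {(e j).1, (e j).2} = ∅) := by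
  classical
  rintro ⟨e, he, hM⟩
  set x : Fin k → V := fun i => (e i).1 with hxdef
  set y : Fin k → V := fun i => (e i).2 with hydef
  have hadj : ∀ i, G.Adj (x i) (y i) := fun i => (he i).1
  choose ρ hρ using fun i => (he i).2
  choose p hp using hcover
  -- uniqueness of parts
  have huniq : ∀ v (q : Fin 4), v ∈ Vp q → q = p v := by
    intro v q hv
    by_contra h
    exact Finset.disjoint_left.mp (hdisj q (p v) h) hv (hp v)
  have hadjp : ∀ u v, G.Adj u v → p u ≠ p v := by
    intro u v huv h
    exact hpartite u v huv (p v) (h ▸ hp u) (hp v)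
  -- endpoint distinctness from the matching hypothesis
  have hne : ∀ i j : Fin k, i ≠ j →
      x i ≠ x j ∧ x i ≠ y j ∧ y i ≠ x j ∧ y i ≠ y j := by
    intro i j hij
    have h := hM i j hij
    have hmem : ∀ a : V, a ∈ ({x i, y i} : Set V) → a ∈ ({x j, y j} : Set V) → False := by
      intro a h1 h2
      have : a ∈ ({x i, y i} : Set V) ∩ {x j, y j} := ⟨h1, h2⟩
      rw [h] at this
      exact this
    refine ⟨?_, ?_, ?_, ?_⟩ <;> intro hEq
    · exact hmem (x i) (Or.inl rfl) (Or.inl hEq)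
    · exact hmem (x i) (Or.inl rfl) (Or.inr hEq)
    · exact hmem (y i) (Or.inr rfl) (Or.inl hEq)
    · exact hmem (y i) (Or.inr rfl) (Or.inr hEq)
  -- sets with pairwise distinct parts meet each Vp q in at most one vertex
  have keycard : ∀ (s : Finset V), (∀ a ∈ s, ∀ b ∈ s, a ≠ b → p a ≠ p b) →
      ∀ q : Fin 4, (s ∩ Vp q).card ≤ 1 := by
    intro s hs q
    apply Finset.card_le_one.mpr
    intro a ha b hb
    rw [Finset.mem_inter] at ha hb
    by_contra hab
    exact hs a ha.1 b hb.1 hab (by rw [← huniq a q ha.2, ← huniq b q hb.2])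
  -- greedy construction of apexes
  have key : ∀ n : ℕ, n ≤ k → ∃ z : Fin k → V,
      ∀ i : Fin k, (i : ℕ) < n →
        (G.Adj (x i) (z i) ∧ G.Adj (y i) (z i)) ∧
        (∀ j : Fin k, j ≠ i → z i ≠ x j ∧ z i ≠ y j) ∧
        (∀ j : Fin k, (j : ℕ) < (i : ℕ) → z i ≠ z j) := by
    intro n
    induction n with
    | zero => intro _; exact ⟨fun _ => x ⟨0, hk⟩, fun i hi => absurd hi (by omega)⟩
    | succ n ih =>
      intro hn1
      obtain ⟨z, hz⟩ := ih (by omega)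
      have hnk : n < k := hn1
      set N : Fin k := ⟨n, hnk⟩ with hNdef
      set q : Fin 4 := ρ N with hqdef
      set C : Finset V := (G.neighborFinset (x N) ∩ G.neighborFinset (y N)) ∩ Vp q with hCdef
      have hC : k ≤ C.card := hρ N
      set f : Fin k → Finset V := fun j =>
        if (j : ℕ) < n then {x j, y j, z j} else if j = N then ∅ else {x j, y j} with hfdef
      set B : Finset V := Finset.univ.biUnion f with hBdef
      -- each f j meets Vp q in at most one vertex
      have hfcard : ∀ j : Fin k, (f j ∩ Vp q).card ≤ 1 := by
        intro j
        by_cases hj1 : (j : ℕ) < n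
        · have hzj := hz j hj1
          have hxz : p (x j) ≠ p (z j) := hadjp _ _ hzj.1.1
          have hyz : p (y j) ≠ p (z j) := hadjp _ _ hzj.1.2
          have hxy : p (x j) ≠ p (y j) := hadjp _ _ (hadj j)
          simp only [hfdef, hj1, if_pos]
          apply keycard
          intro a ha b hb hab
          simp only [Finset.mem_insert, Finset.mem_singleton] at ha hb
          rcases ha with ha | ha | ha <;> rcases hb with hb | hb | hb <;> subst ha <;> subst hb
          · exact absurd rfl hab
          · exact hxy
          · exact hxz
          · exact hxy.symm
          · exact absurd rfl hab
          · exact hyz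
          · exact hxz.symm
          · exact hyz.symm
          · exact absurd rfl hab
        · by_cases hj2 : j = N
          · subst hj2; simp [hfdef, hj1]
          · have hxy : p (x j) ≠ p (y j) := hadjp _ _ (hadj j)
            simp only [hfdef, hj1, if_neg, hj2, if_neg, if_false]
            apply keycard
            intro a ha b hb hab
            simp only [Finset.mem_insert, Finset.mem_singleton] at ha hb
            rcases ha with ha | ha <;> rcases hb with hb | hb <;> subst ha <;> subst hb
            · exact absurd rfl hab
            · exact hxy
            · exact hxy.symm
            · exact absurd rfl hab
      -- bound on blocked candidates
      have hBcard : (B ∩ Vp q).card ≤ k - 1 := by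
        have hsub : B ∩ Vp q ⊆ (Finset.univ.erase N).biUnion (fun j => f j ∩ Vp q) := by
          intro a ha
          rw [Finset.mem_inter] at ha
          obtain ⟨j, _, hj⟩ := Finset.mem_biUnion.mp ha.1
          have hjN : j ≠ N := by
            intro hEq
            rw [hEq] at hj
            have hnn : ¬ ((N : ℕ) < n) := by simp [hNdef]
            simp [hfdef, hnn] at hj
          exact Finset.mem_biUnion.mpr ⟨j, Finset.mem_erase.mpr ⟨hjN, Finset.mem_univ j⟩,
            Finset.mem_inter.mpr ⟨hj, ha.2⟩⟩
        calc (B ∩ Vp q).card ≤ ((Finset.univ.erase N).biUnion (fun j => f j ∩ Vp q)).card :=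
              Finset.card_le_card hsub
          _ ≤ ∑ j ∈ Finset.univ.erase N, (f j ∩ Vp q).card := Finset.card_biUnion_le
          _ ≤ ∑ _j ∈ Finset.univ.erase N, 1 := Finset.sum_le_sum (fun j _ => hfcard j)
          _ = (Finset.univ.erase N).card := by simp
          _ = k - 1 := by rw [Finset.card_erase_of_mem (Finset.mem_univ N)]; simp
      -- find an unblocked candidate
      have hnonempty : (C \ B).Nonempty := by
        have hsub2 : C \ (B ∩ Vp q) ⊆ C \ B := by
          intro a ha
          rw [Finset.mem_sdiff] at ha ⊢
          refine ⟨ha.1, fun hB => ha.2 (Finset.mem_inter.mpr ⟨hB, ?_⟩)⟩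
          have := ha.1
          rw [hCdef, Finset.mem_inter] at this
          exact this.2
        have h1 : 1 ≤ (C \ (B ∩ Vp q)).card := by
          have := Finset.le_card_sdiff (B ∩ Vp q) C
          omega
        have : 1 ≤ (C \ B).card := le_trans h1 (Finset.card_le_card hsub2)
        exact Finset.card_pos.mp (by omega)
      obtain ⟨w, hw⟩ := hnonempty
      rw [Finset.mem_sdiff] at hw
      have hwC := hw.1
      rw [hCdef, Finset.mem_inter, Finset.mem_inter] at hwC
      have hwB : ∀ j : Fin k, ∀ a ∈ f j, w ≠ a := by
        intro j a ha hEq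
        exact hw.2 (Finset.mem_biUnion.mpr ⟨j, Finset.mem_univ j, hEq ▸ ha⟩)
      refine ⟨Function.update z N w, ?_⟩
      intro i hi
      by_cases hiN : i = N
      · subst hiN
        rw [Function.update_self]
        refine ⟨⟨(SimpleGraph.mem_neighborFinset G _ _).mp hwC.1.1,
          (SimpleGraph.mem_neighborFinset G _ _).mp hwC.1.2⟩, ?_, ?_⟩
        · intro j hj
          have hxj : x j ∈ f j := by
            by_cases hj1 : (j : ℕ) < n <;> simp [hfdef, hj1, hj]
          have hyj : y j ∈ f j := by
            by_cases hj1 : (j : ℕ) < n <;> simp [hfdef, hj1, hj]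
          exact ⟨hwB j (x j) hxj, hwB j (y j) hyj⟩
        · intro j hj
          have hjn : (j : ℕ) < n := hj
          have hjN : j ≠ N := Fin.ne_of_lt hj
          rw [Function.update_of_ne hjN]
          exact hwB j (z j) (by simp [hfdef, hjn])
      · have hin : (i : ℕ) < n := by
          rcases Nat.lt_succ_iff_lt_or_eq.mp hi with h | h
          · exact h
          · exact absurd (Fin.ext h) hiN
        rw [Function.update_of_ne hiN]
        obtain ⟨h1, h2, h3⟩ := hz i hin
        refine ⟨h1, h2, ?_⟩
        intro j hj
        have hjN : j ≠ N := by
          intro hEq; subst hEq; simp only [hNdef] at hj; omega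
        rw [Function.update_of_ne hjN]
        exact h3 j hj
  obtain ⟨z, hz⟩ := key k le_rfl
  have hzfull : ∀ i : Fin k,
      (G.Adj (x i) (z i) ∧ G.Adj (y i) (z i)) ∧
      (∀ j : Fin k, j ≠ i → z i ≠ x j ∧ z i ≠ y j) ∧
      (∀ j : Fin k, (j : ℕ) < (i : ℕ) → z i ≠ z j) := fun i => hz i i.isLt
  have hzz : ∀ i j : Fin k, i ≠ j → z i ≠ z j := by
    intro i j hij
    rcases lt_or_gt_of_ne (fun h : (i : ℕ) = (j : ℕ) => hij (Fin.ext h)) with h | h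
    · exact fun hEq => (hzfull j).2.2 i h hEq.symm
    · exact (hzfull i).2.2 j h
  set T : Fin k → Finset V := fun i => {x i, y i, z i} with hTdef
  -- pairwise disjointness of the triangles
  have hTdisj : ∀ i j : Fin k, i ≠ j → Disjoint (T i) (T j) := by
    intro i j hij
    rw [Finset.disjoint_left]
    intro a hai haj
    simp only [hTdef, Finset.mem_insert, Finset.mem_singleton] at hai haj
    obtain ⟨hij1, hij2, hij3, hij4⟩ := hne i j hij
    have hzi := (hzfull i).2.1 j (Ne.symm hij)
    have hzj := (hzfull j).2.1 i hij
    rcases hai with h1 | h1 | h1 <;> rcases haj with h2 | h2 | h2 <;> subst h1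
    · exact hij1 h2
    · exact hij2 h2
    · exact hzj.1 h2.symm
    · exact hij3 h2
    · exact hij4 h2
    · exact hzj.2 h2.symm
    · exact hzi.1 h2
    · exact hzi.2 h2
    · exact hzz i j hij h2
  have hTne : ∀ i : Fin k, (T i).Nonempty := fun i => ⟨x i, by simp [hTdef]⟩
  have hTinj : Function.Injective T := by
    intro i j hEq
    by_contra hij
    have := hTdisj i j hij
    rw [hEq] at this
    exact (hTne j).ne_empty (by simpa using disjoint_self.mp this)
  apply hfree
  refine ⟨Finset.image T Finset.univ, ?_, ?_, ?_⟩
  · rw [Finset.card_image_of_injective _ hTinj, Finset.card_univ, Fintype.card_fin]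
  · intro S hS
    obtain ⟨i, _, hi⟩ := Finset.mem_image.mp hS
    subst hi
    have hzi := (hzfull i).1
    exact SimpleGraph.is3Clique_triple_iff.mpr ⟨hadj i, hzi.1, hzi.2⟩
  · intro S hS S' hS' hSS'
    simp only [Finset.coe_image, Set.mem_image] at hS hS'
    obtain ⟨i, _, hi⟩ := hS
    obtain ⟨j, _, hj⟩ := hS'
    subst hi; subst hj
    exact hTdisj i j (fun h => hSS' (by rw [h]))
end

section
/- Let k ≥ 1 and let G be a 4-partite graph with parts V1, V2, V3, V4 that contains no k pairwise vertex-disjoint triangles. Suppose v is a vertex incident to k rich edges vu1, …, vuk, where u1, …, uk all lie in the same part of G (an edge xy of G is rich if x and y have at least k common neighbors in a single part). Then the graph obtained from G by deleting the vertex v contains no k−1 pairwise vertex-disjoint triangles. -/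
/-!
STATEMENT 12: Let k ≥ 1 and let G be a 4-partite graph with parts V1, V2, V3, V4
that contains no k pairwise vertex-disjoint triangles. Suppose v is a vertex
incident to k rich edges vu1, …, vuk, where u1, …, uk all lie in the same part
of G (an edge xy of G is rich if x and y have at least k common neighbors in a
single part). Then the graph obtained from G by deleting the vertex v contains
no k−1 pairwise vertex-disjoint triangles.
-/
theorem delete_vertex_with_many_rich_edges
    (k : ℕ) (hk : 1 ≤ k)
    (V : Type) [Fintype V] [DecidableEq V]
    (G : SimpleGraph V) [DecidableRel G.Adj]
    (Vp : Fin 4 → Finset V)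
    (hdisj : ∀ i j : Fin 4, i ≠ j → Disjoint (Vp i) (Vp j))
    (hcover : ∀ v : V, ∃ i, v ∈ Vp i)
    (hpartite : ∀ u v : V, G.Adj u v → ∀ i, u ∈ Vp i → v ∈ Vp i → False)
    -- G contains no k pairwise vertex-disjoint triangles
    (hfree : ¬ ∃ S : Finset (Finset V), S.card = k ∧ (∀ T ∈ S, G.IsNClique 3 T) ∧
        (S : Set (Finset V)).Pairwise Disjoint)
    -- v is incident to k rich edges vu1, …, vuk with u1, …, uk in one part
    (v : V) (u : Fin k → V) (hinj : Function.Injective u)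
    (hsamepart : ∃ p : Fin 4, ∀ i : Fin k, u i ∈ Vp p)
    (hadj : ∀ i : Fin k, G.Adj v (u i))
    (hrich : ∀ i : Fin k,
      ∃ p : Fin 4, k ≤ ((G.neighborFinset v ∩ G.neighborFinset (u i)) ∩ Vp p).card) :
    -- G − v contains no k − 1 pairwise vertex-disjoint triangles
    ¬ ∃ S : Finset (Finset V), S.card = k - 1 ∧
        (∀ T ∈ S, G.IsNClique 3 T ∧ v ∉ T) ∧
        (S : Set (Finset V)).Pairwise Disjoint := by
  rintro ⟨S, hScard, hStri, hSdisj⟩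
  set U := S.biUnion id with hU
  -- each triangle meets each part in at most one vertex
  have hUcap : ∀ p : Fin 4, (U ∩ Vp p).card ≤ k - 1 := by
    intro p
    have h1 : U ∩ Vp p ⊆ S.biUnion (fun T => T ∩ Vp p) := by
      intro x hx
      simp only [hU, Finset.mem_inter, Finset.mem_biUnion, id] at hx ⊢
      obtain ⟨⟨T, hT, hxT⟩, hxp⟩ := hx
      exact ⟨T, hT, hxT, hxp⟩
    calc (U ∩ Vp p).card ≤ (S.biUnion (fun T => T ∩ Vp p)).card := Finset.card_le_card h1
      _ ≤ ∑ T ∈ S, (T ∩ Vp p).card := Finset.card_biUnion_le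
      _ ≤ ∑ T ∈ S, 1 := Finset.sum_le_sum (fun T hT => ?_)
      _ = k - 1 := by simp [hScard]
    apply Finset.card_le_one.mpr
    intro a ha b hb
    by_contra hab
    have hadj' : G.Adj a b :=
      (hStri T hT).1.1 (Finset.mem_inter.mp ha).1 (Finset.mem_inter.mp hb).1 hab
    exact hpartite a b hadj' p (Finset.mem_inter.mp ha).2 (Finset.mem_inter.mp hb).2
  obtain ⟨p0, hp0⟩ := hsamepart
  -- some u i avoids all triangles
  have hexi : ∃ i : Fin k, u i ∉ U := by
    by_contra h
    push_neg at h
    have himg : Finset.univ.image u ⊆ U ∩ Vp p0 := by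
      intro x hx
      obtain ⟨i, _, rfl⟩ := Finset.mem_image.mp hx
      exact Finset.mem_inter.mpr ⟨h i, hp0 i⟩
    have : k ≤ k - 1 := by
      calc k = (Finset.univ.image u).card := by
              rw [Finset.card_image_of_injective _ hinj]; simp
        _ ≤ (U ∩ Vp p0).card := Finset.card_le_card himg
        _ ≤ k - 1 := hUcap p0
    omega
  obtain ⟨i, hiU⟩ := hexi
  obtain ⟨p, hp⟩ := hrich i
  set C := (G.neighborFinset v ∩ G.neighborFinset (u i)) ∩ Vp p with hC
  -- a common neighbor avoiding all triangles
  have hexw : ∃ w ∈ C, w ∉ U := by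
    by_contra h
    push_neg at h
    have hsub : C ⊆ U ∩ Vp p := by
      intro x hx
      exact Finset.mem_inter.mpr ⟨h x hx, (Finset.mem_inter.mp hx).2⟩
    have : k ≤ k - 1 := le_trans hp (le_trans (Finset.card_le_card hsub) (hUcap p))
    omega
  obtain ⟨w, hwC, hwU⟩ := hexw
  have hwv : G.Adj v w := by
    have := (Finset.mem_inter.mp (Finset.mem_inter.mp hwC).1).1
    exact (SimpleGraph.mem_neighborFinset _ _ _).mp this
  have hwu : G.Adj (u i) w := by
    have := (Finset.mem_inter.mp (Finset.mem_inter.mp hwC).1).2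
    exact (SimpleGraph.mem_neighborFinset _ _ _).mp this
  set T' : Finset V := {v, u i, w} with hT'
  have hT'clique : G.IsNClique 3 T' :=
    SimpleGraph.is3Clique_triple_iff.mpr ⟨hadj i, hwv, hwu⟩
  have hnotinU : ∀ x, x ∉ U → ∀ T ∈ S, x ∉ T := by
    intro x hx T hT hxT
    exact hx (Finset.mem_biUnion.mpr ⟨T, hT, hxT⟩)
  have hvU : ∀ T ∈ S, v ∉ T := fun T hT => (hStri T hT).2
  have hnewdisj : ∀ T ∈ S, Disjoint T' T := by
    intro T hT
    rw [Finset.disjoint_left]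
    intro x hx
    simp only [hT', Finset.mem_insert, Finset.mem_singleton] at hx
    rcases hx with rfl | rfl | rfl
    · exact hvU T hT
    · exact hnotinU _ hiU T hT
    · exact hnotinU _ hwU T hT
  have hT'notS : T' ∉ S := by
    intro h
    exact hvU T' h (by simp [hT'])
  apply hfree
  refine ⟨insert T' S, ?_, ?_, ?_⟩
  · rw [Finset.card_insert_of_notMem hT'notS, hScard]; omega
  · intro T hT
    rcases Finset.mem_insert.mp hT with rfl | hT
    · exact hT'clique
    · exact (hStri T hT).1
  · rw [Finset.coe_insert]
    apply Set.Pairwise.insert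
    · intro A hA B hB hAB
      exact hSdisj hA hB hAB
    · intro T hT _
      exact ⟨hnewdisj T hT, (hnewdisj T hT).symm⟩
end

section
/- Let k ≥ 1 and let G be a 3-partite graph with parts of sizes a ≥ b ≥ c, where c ≥ 4k. If G contains no matching of size k (i.e., no k pairwise vertex-disjoint edges), then e(G) ≤ (k−1)(a+b). -/
set_option linter.unusedSectionVars false
section Aux

variable {V : Type} [Fintype V] [DecidableEq V]

/-- A matching given as a finset of ordered pairs. -/
def PairM (G : SimpleGraph V) (M : Finset (V × V)) : Prop :=
  (∀ p ∈ M, G.Adj p.1 p.2) ∧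
  ∀ p ∈ M, ∀ q ∈ M, p ≠ q →
    p.1 ≠ q.1 ∧ p.1 ≠ q.2 ∧ p.2 ≠ q.1 ∧ p.2 ≠ q.2

/-- Support of a pair-matching. -/
def psupp (M : Finset (V × V)) : Finset V := M.biUnion (fun p => {p.1, p.2})

lemma mem_psupp {M : Finset (V × V)} {v : V} :
    v ∈ psupp M ↔ ∃ p ∈ M, v = p.1 ∨ v = p.2 := by
  simp [psupp, Finset.mem_biUnion, Finset.mem_insert, Finset.mem_singleton]

lemma fst_mem_psupp {M : Finset (V × V)} {p : V × V} (hp : p ∈ M) : p.1 ∈ psupp M :=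
  mem_psupp.2 ⟨p, hp, Or.inl rfl⟩

lemma snd_mem_psupp {M : Finset (V × V)} {p : V × V} (hp : p ∈ M) : p.2 ∈ psupp M :=
  mem_psupp.2 ⟨p, hp, Or.inr rfl⟩

lemma psupp_card_le (M : Finset (V × V)) : (psupp M).card ≤ 2 * M.card := by
  classical
  calc (psupp M).card ≤ ∑ p ∈ M, ({p.1, p.2} : Finset V).card := Finset.card_biUnion_le
    _ ≤ ∑ p ∈ M, 2 := Finset.sum_le_sum (fun p _ => Finset.card_insert_le _ _ |>.trans (by simp))
    _ = 2 * M.card := by rw [Finset.sum_const, smul_eq_mul, mul_comm]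

lemma PairM.insert_pair {G : SimpleGraph V} {M : Finset (V × V)} {x y : V}
    (hM : PairM G M) (hxy : G.Adj x y) (hx : x ∉ psupp M) (hy : y ∉ psupp M) :
    PairM G (insert (x, y) M) ∧ (insert (x, y) M).card = M.card + 1 := by
  have hnm : (x, y) ∉ M := fun h => hx (fst_mem_psupp h)
  constructor
  · constructor
    · intro p hp
      rcases Finset.mem_insert.1 hp with rfl | hp
      · exact hxy
      · exact hM.1 p hp
    · intro p hp q hq hpq
      rcases Finset.mem_insert.1 hp with rfl | hp <;>
        rcases Finset.mem_insert.1 hq with rfl | hq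
      · exact absurd rfl hpq
      · refine ⟨?_, ?_, ?_, ?_⟩ <;> intro h
        · exact hx (by rw [show x = q.1 from h]; exact fst_mem_psupp hq)
        · exact hx (by rw [show x = q.2 from h]; exact snd_mem_psupp hq)
        · exact hy (by rw [show y = q.1 from h]; exact fst_mem_psupp hq)
        · exact hy (by rw [show y = q.2 from h]; exact snd_mem_psupp hq)
      · refine ⟨?_, ?_, ?_, ?_⟩ <;> intro h
        · exact hx (by rw [show x = p.1 from h.symm]; exact fst_mem_psupp hp)
        · exact hy (by rw [show y = p.1 from h.symm]; exact fst_mem_psupp hp)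
        · exact hx (by rw [show x = p.2 from h.symm]; exact snd_mem_psupp hp)
        · exact hy (by rw [show y = p.2 from h.symm]; exact snd_mem_psupp hp)
      · exact hM.2 p hp q hq hpq
  · exact Finset.card_insert_of_notMem hnm

/-- Graph with vertex v isolated. -/
def delV (G : SimpleGraph V) (v : V) : SimpleGraph V where
  Adj x y := G.Adj x y ∧ x ≠ v ∧ y ≠ v
  symm := ⟨by intro x y h; exact ⟨h.1.symm, h.2.2, h.2.1⟩⟩
  loopless := ⟨fun x h => G.loopless.irrefl x h.1⟩

instance delV_dec (G : SimpleGraph V) [DecidableRel G.Adj] (v : V) :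
    DecidableRel (delV G v).Adj :=
  fun x y => inferInstanceAs (Decidable (G.Adj x y ∧ x ≠ v ∧ y ≠ v))

lemma delV_degree_le (G : SimpleGraph V) [DecidableRel G.Adj] (v x : V) :
    (delV G v).degree x ≤ G.degree x := by
  apply Finset.card_le_card
  intro u hu
  rw [SimpleGraph.mem_neighborFinset] at hu ⊢
  exact hu.1

lemma delV_edge_count (G : SimpleGraph V) [DecidableRel G.Adj] (v : V) :
    G.edgeFinset.card ≤ (delV G v).edgeFinset.card + G.degree v := by
  rw [← SimpleGraph.card_incidenceFinset_eq_degree]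
  refine le_trans (Finset.card_le_card ?_) (Finset.card_union_le _ _)
  intro e he
  induction e with
  | h x y =>
    rw [SimpleGraph.mem_edgeFinset, SimpleGraph.mem_edgeSet] at he
    rw [Finset.mem_union]
    by_cases hv : x = v ∨ y = v
    · right
      rw [SimpleGraph.mem_incidenceFinset]
      refine ⟨he, ?_⟩
      rw [Sym2.mem_iff]
      tauto
    · left
      push_neg at hv
      rw [SimpleGraph.mem_edgeFinset, SimpleGraph.mem_edgeSet]
      exact ⟨he, hv.1, hv.2⟩

lemma delV_pairM {G : SimpleGraph V} {v : V} {M : Finset (V × V)}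
    (h : PairM (delV G v) M) : PairM G M ∧ v ∉ psupp M := by
  constructor
  · exact ⟨fun p hp => (h.1 p hp).1, h.2⟩
  · intro hv
    obtain ⟨p, hp, hor⟩ := mem_psupp.1 hv
    have := h.1 p hp
    rcases hor with rfl | rfl
    · exact this.2.1 rfl
    · exact this.2.2 rfl

lemma edge_card_le_sum_degree (G : SimpleGraph V) [DecidableRel G.Adj] (S : Finset V)
    (h : ∀ e ∈ G.edgeFinset, ∃ w ∈ S, w ∈ e) :
    G.edgeFinset.card ≤ ∑ w ∈ S, G.degree w := by
  have hsub : G.edgeFinset ⊆ S.biUnion (fun w => G.incidenceFinset w) := by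
    intro e he
    obtain ⟨w, hw, hwe⟩ := h e he
    refine Finset.mem_biUnion.2 ⟨w, hw, ?_⟩
    rw [SimpleGraph.mem_incidenceFinset]
    exact ⟨SimpleGraph.mem_edgeFinset.1 he, hwe⟩
  calc G.edgeFinset.card ≤ (S.biUnion (fun w => G.incidenceFinset w)).card :=
        Finset.card_le_card hsub
    _ ≤ ∑ w ∈ S, (G.incidenceFinset w).card := Finset.card_biUnion_le
    _ = ∑ w ∈ S, G.degree w := by
        refine Finset.sum_congr rfl fun w _ => ?_
        exact SimpleGraph.card_incidenceFinset_eq_degree G w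



lemma key_lemma {V : Type} [Fintype V] [DecidableEq V] (D : ℕ) :
    ∀ (m : ℕ) (G : SimpleGraph V) [inst : DecidableRel G.Adj],
      4 * m ≤ D → (∀ v, G.degree v ≤ D) →
      (¬ ∃ M : Finset (V × V), PairM G M ∧ M.card = m + 1) →
      G.edgeFinset.card ≤ m * D := by
  intro m
  induction m with
  | zero =>
    intro G inst _ _ hno
    simp only [Nat.zero_mul, Nat.le_zero, Finset.card_eq_zero]
    rw [Finset.eq_empty_iff_forall_notMem]
    intro e he
    induction e with
    | h x y =>
      rw [SimpleGraph.mem_edgeFinset, SimpleGraph.mem_edgeSet] at he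
      refine hno ⟨{(x, y)}, ⟨⟨?_, ?_⟩, Finset.card_singleton _⟩⟩
      · intro p hp; rw [Finset.mem_singleton] at hp; subst hp; exact he
      · intro p hp q hq hpq
        rw [Finset.mem_singleton] at hp hq
        exact absurd (hp.trans hq.symm) hpq
  | succ m ih =>
    intro G inst hD hdeg hno
    by_cases h1 : ∃ M : Finset (V × V), PairM G M ∧ M.card = m + 1
    · obtain ⟨M, hM, hMc⟩ := h1
      by_cases h2 : ∀ v : V, ∃ N : Finset (V × V), PairM (delV G v) N ∧ N.card = m + 1
      · -- every vertex is inessential: all degrees ≤ 2(m+1), all edges meet psupp M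
        have hdeg2 : ∀ w : V, G.degree w ≤ 2 * (m + 1) := by
          intro w
          obtain ⟨N, hN, hNc⟩ := h2 w
          obtain ⟨hNG, hwN⟩ := delV_pairM hN
          have hsub : G.neighborFinset w ⊆ psupp N := by
            intro u hu
            rw [SimpleGraph.mem_neighborFinset] at hu
            by_contra huN
            obtain ⟨hins, hinsc⟩ := hNG.insert_pair hu hwN huN
            exact hno ⟨_, hins, by omega⟩
          calc G.degree w ≤ (psupp N).card := Finset.card_le_card hsub
            _ ≤ 2 * N.card := psupp_card_le N
            _ = 2 * (m + 1) := by rw [hNc]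
        have hcov : ∀ e ∈ G.edgeFinset, ∃ w ∈ psupp M, w ∈ e := by
          intro e he
          induction e with
          | h x y =>
            rw [SimpleGraph.mem_edgeFinset, SimpleGraph.mem_edgeSet] at he
            by_cases hx : x ∈ psupp M
            · exact ⟨x, hx, Sym2.mem_mk_left x y⟩
            · by_cases hy : y ∈ psupp M
              · exact ⟨y, hy, Sym2.mem_mk_right x y⟩
              · obtain ⟨hins, hinsc⟩ := hM.insert_pair he hx hy
                exact absurd ⟨_, hins, by omega⟩ hno
        calc G.edgeFinset.card ≤ ∑ w ∈ psupp M, G.degree w :=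
              edge_card_le_sum_degree G _ hcov
          _ ≤ ∑ w ∈ psupp M, 2 * (m + 1) :=
              Finset.sum_le_sum (fun w _ => hdeg2 w)
          _ = (psupp M).card * (2 * (m + 1)) := by
              rw [Finset.sum_const, smul_eq_mul]
          _ ≤ (2 * (m + 1)) * (2 * (m + 1)) := by
              have := psupp_card_le M
              rw [hMc] at this
              exact Nat.mul_le_mul_right _ this
          _ ≤ (m + 1) * D := by nlinarith
      · rw [not_forall] at h2
        obtain ⟨v, hv⟩ := h2
        have hdel := ih (delV G v) (by omega) (fun x => (delV_degree_le G v x).trans (hdeg x)) hv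
        calc G.edgeFinset.card ≤ (delV G v).edgeFinset.card + G.degree v :=
              delV_edge_count G v
          _ ≤ m * D + D := Nat.add_le_add hdel (hdeg v)
          _ = (m + 1) * D := by ring
    · have := ih G (by omega) hdeg h1
      calc G.edgeFinset.card ≤ m * D := this
        _ ≤ (m + 1) * D := Nat.mul_le_mul_right _ (by omega)

theorem tripartite_no_matching_edge_bound
    (k : ℕ) (hk : 1 ≤ k)
    (V : Type) [Fintype V] [DecidableEq V]
    (G : SimpleGraph V)
    (Vp : Fin 3 → Finset V) (a b c : ℕ)
    (hdisj : ∀ i j : Fin 3, i ≠ j → Disjoint (Vp i) (Vp j))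
    (hcover : ∀ v : V, ∃ i, v ∈ Vp i)
    (hcard0 : (Vp 0).card = a) (hcard1 : (Vp 1).card = b) (hcard2 : (Vp 2).card = c)
    (hab : b ≤ a) (hbc : c ≤ b) (hc : 4 * k ≤ c)
    (hpartite : ∀ u v : V, G.Adj u v → ∀ i, u ∈ Vp i → v ∈ Vp i → False)
    -- G contains no matching of size k
    (hnomatching : ¬ ∃ e : Fin k → V × V,
      (∀ i : Fin k, G.Adj (e i).1 (e i).2) ∧
      (∀ i j : Fin k, i ≠ j →
        ({(e i).1, (e i).2} : Set V) ∩ {(e j).1, (e j).2} = ∅)) :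
    G.edgeSet.ncard ≤ (k - 1) * (a + b) := by
  classical
  -- no pair-matching of size k
  have hno' : ¬ ∃ M : Finset (V × V), PairM G M ∧ M.card = k := by
    rintro ⟨M, hM, hMc⟩
    apply hnomatching
    set ek := M.equivFin.symm with hek
    refine ⟨fun i => (ek (Fin.cast hMc.symm i) : V × V), fun i => hM.1 _ (ek _).2, ?_⟩
    intro i j hij
    have hne : ((ek (Fin.cast hMc.symm i)) : V × V) ≠ ((ek (Fin.cast hMc.symm j)) : V × V) := by
      intro h
      apply hij
      have h2 := M.equivFin.symm.injective (Subtype.ext h)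
      exact Fin.ext (by simpa using congrArg Fin.val h2)
    obtain ⟨h1, h2, h3, h4⟩ := hM.2 _ (ek _).2 _ (ek _).2 hne
    rw [Set.eq_empty_iff_forall_notMem]
    rintro v ⟨hv1, hv2⟩
    simp only [Set.mem_insert_iff, Set.mem_singleton_iff] at hv1 hv2
    rcases hv1 with rfl | rfl <;> rcases hv2 with h | h <;>
      first
      | exact h1 h | exact h2 h | exact h3 h | exact h4 h
  -- the number of vertices
  have huniv : (Finset.univ : Finset V).card = a + b + c := by
    have he : ((Vp 0 ∪ Vp 1) ∪ Vp 2) = (Finset.univ : Finset V) := by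
      apply Finset.eq_univ_iff_forall.2
      intro v
      obtain ⟨i, hi⟩ := hcover v
      fin_cases i <;> simp only [Finset.mem_union] <;> tauto
    have d01 := hdisj 0 1 (by decide)
    have d02 := hdisj 0 2 (by decide)
    have d12 := hdisj 1 2 (by decide)
    rw [← he, Finset.card_union_of_disjoint (Finset.disjoint_union_left.2 ⟨d02, d12⟩),
      Finset.card_union_of_disjoint d01, hcard0, hcard1, hcard2]
  -- degree bound
  have hdegb : ∀ v, G.degree v ≤ a + b := by
    intro v
    obtain ⟨i, hi⟩ := hcover v
    have hci : c ≤ (Vp i).card := by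
      fin_cases i
      · show c ≤ (Vp 0).card
        omega
      · show c ≤ (Vp 1).card
        omega
      · show c ≤ (Vp 2).card
        omega
    have hsub : G.neighborFinset v ⊆ Finset.univ \ Vp i := by
      intro u hu
      rw [SimpleGraph.mem_neighborFinset] at hu
      rw [Finset.mem_sdiff]
      exact ⟨Finset.mem_univ u, fun hui => hpartite v u hu i hi hui⟩
    have h1 : G.degree v ≤ (Finset.univ : Finset V).card - (Vp i).card := by
      rw [← Finset.card_sdiff_of_subset (Finset.subset_univ (Vp i))]
      exact Finset.card_le_card hsub
    omega
  have hkey := key_lemma (a + b) (k - 1) G (by omega) hdegb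
    (by
      have hk1 : k - 1 + 1 = k := by omega
      rw [hk1]
      exact hno')
  rw [← SimpleGraph.coe_edgeFinset, Set.ncard_coe_finset]
  exact hkey
end Aux
end

section
/- Let G be a 4-partite graph with parts V1, V2, V3, V4 of sizes n1, n2, n3, n4, and let Z ⊆ V(G) be a set with |Z| < min{n1, n2, n3, n4} such that every triangle of G contains an edge with both endpoints in Z. Fix distinct i, j ∈ {1,2,3,4} and suppose that every edge xy of G with x ∈ Vi and y ∈ Vj satisfies d(x) + d(y) > n1 + n2 + n3 + n4. Then every edge of G between Vi and Vj has both endpoints in Z; that is, there is no edge between Vi \ Z and Vj, and no edge between Vi and Vj \ Z. -/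
private lemma common_neighbor {V : Type} [Fintype V] [DecidableEq V]
    (G : SimpleGraph V) [DecidableRel G.Adj] (x y : V)
    (h : Fintype.card V < G.degree x + G.degree y) :
    ∃ z, G.Adj x z ∧ G.Adj y z := by
  by_contra hc
  push_neg at hc
  have hd : G.neighborFinset x ∩ G.neighborFinset y = ∅ := by
    ext z
    simp only [Finset.mem_inter, SimpleGraph.mem_neighborFinset, Finset.notMem_empty, iff_false,
      not_and]
    exact fun h1 h2 => hc z h1 h2
  have h2 := Finset.card_union_add_card_inter (G.neighborFinset x) (G.neighborFinset y)
  have hle : (G.neighborFinset x ∪ G.neighborFinset y).card ≤ Fintype.card V :=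
    Finset.card_le_card (Finset.subset_univ _)
  rw [hd] at h2
  simp only [Finset.card_empty, add_zero, SimpleGraph.card_neighborFinset_eq_degree] at h2
  omega

private lemma key_lemma_s15
    (V : Type) [Fintype V] [DecidableEq V]
    (G : SimpleGraph V) [DecidableRel G.Adj]
    (Vp : Fin 4 → Finset V) (n : Fin 4 → ℕ)
    (hdisj : ∀ i j : Fin 4, i ≠ j → Disjoint (Vp i) (Vp j))
    (hcover : ∀ v : V, ∃ i, v ∈ Vp i)
    (hcard : ∀ i, (Vp i).card = n i)
    (hpartite : ∀ u v : V, G.Adj u v → ∀ i, u ∈ Vp i → v ∈ Vp i → False)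
    (Z : Finset V)
    (hZsmall : Z.card < min (min (n 0) (n 1)) (min (n 2) (n 3)))
    (hZ : ∀ x y z : V, G.Adj x y → G.Adj x z → G.Adj y z →
      (x ∈ Z ∧ y ∈ Z) ∨ (x ∈ Z ∧ z ∈ Z) ∨ (y ∈ Z ∧ z ∈ Z))
    (i j : Fin 4) (hij : i ≠ j)
    (hdeg : ∀ x ∈ Vp i, ∀ y ∈ Vp j, G.Adj x y →
      n 0 + n 1 + n 2 + n 3 < G.degree x + G.degree y) :
    ∀ x ∈ Vp i, x ∉ Z → ∀ y ∈ Vp j, ¬ G.Adj x y := by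
  -- splitting cardinalities over the four parts
  have split : ∀ A : Finset V,
      A.card = (A ∩ Vp 0).card + (A ∩ Vp 1).card + (A ∩ Vp 2).card + (A ∩ Vp 3).card := by
    intro A
    have hA : A = ((A ∩ Vp 0) ∪ (A ∩ Vp 1)) ∪ ((A ∩ Vp 2) ∪ (A ∩ Vp 3)) := by
      ext v
      simp only [Finset.mem_union, Finset.mem_inter]
      constructor
      · intro hv
        obtain ⟨t, ht⟩ := hcover v
        fin_cases t <;> tauto
      · tauto
    have d01 : Disjoint (A ∩ Vp 0) (A ∩ Vp 1) :=
      (hdisj 0 1 (by decide)).mono Finset.inter_subset_right Finset.inter_subset_right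
    have d23 : Disjoint (A ∩ Vp 2) (A ∩ Vp 3) :=
      (hdisj 2 3 (by decide)).mono Finset.inter_subset_right Finset.inter_subset_right
    have d02 : Disjoint (A ∩ Vp 0) (A ∩ Vp 2) :=
      (hdisj 0 2 (by decide)).mono Finset.inter_subset_right Finset.inter_subset_right
    have d03 : Disjoint (A ∩ Vp 0) (A ∩ Vp 3) :=
      (hdisj 0 3 (by decide)).mono Finset.inter_subset_right Finset.inter_subset_right
    have d12 : Disjoint (A ∩ Vp 1) (A ∩ Vp 2) :=
      (hdisj 1 2 (by decide)).mono Finset.inter_subset_right Finset.inter_subset_right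
    have d13 : Disjoint (A ∩ Vp 1) (A ∩ Vp 3) :=
      (hdisj 1 3 (by decide)).mono Finset.inter_subset_right Finset.inter_subset_right
    have dBig : Disjoint ((A ∩ Vp 0) ∪ (A ∩ Vp 1)) ((A ∩ Vp 2) ∪ (A ∩ Vp 3)) := by
      rw [Finset.disjoint_union_left, Finset.disjoint_union_right, Finset.disjoint_union_right]
      exact ⟨⟨d02, d03⟩, ⟨d12, d13⟩⟩
    conv_lhs => rw [hA]
    rw [Finset.card_union_of_disjoint dBig, Finset.card_union_of_disjoint d01,
      Finset.card_union_of_disjoint d23]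
    ring
  have hcardV : Fintype.card V = n 0 + n 1 + n 2 + n 3 := by
    rw [← Finset.card_univ, split Finset.univ]
    simp only [Finset.univ_inter, hcard]
  intro x hx hxZ y hy hxy
  -- every common neighbor of x and y is in Z
  have hcomZ : ∀ z : V, G.Adj x z → G.Adj y z → z ∈ Z := by
    intro z h1 h2
    rcases hZ x y z hxy h1 h2 with ⟨h, _⟩ | ⟨h, _⟩ | ⟨_, h⟩
    · exact absurd h hxZ
    · exact absurd h hxZ
    · exact h
  -- every neighbor of x in Vp j is in Z
  have hBj : G.neighborFinset x ∩ Vp j ⊆ Z ∩ Vp j := by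
    intro y' hy'
    rw [Finset.mem_inter, SimpleGraph.mem_neighborFinset] at hy'
    obtain ⟨hadj, hy'j⟩ := hy'
    have hdd := hdeg x hx y' hy'j hadj
    obtain ⟨z, hz1, hz2⟩ := common_neighbor G x y' (by omega)
    rcases hZ x y' z hadj hz1 hz2 with ⟨h, _⟩ | ⟨h, _⟩ | ⟨h, _⟩
    · exact absurd h hxZ
    · exact absurd h hxZ
    · exact Finset.mem_inter.mpr ⟨h, hy'j⟩
  have F3 : (G.neighborFinset x ∩ Vp i).card = 0 := by
    rw [Finset.card_eq_zero]
    ext v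
    simp only [Finset.mem_inter, SimpleGraph.mem_neighborFinset, Finset.notMem_empty, iff_false,
      not_and]
    exact fun h1 h2 => hpartite x v h1 i hx h2
  have F4 : (G.neighborFinset y ∩ Vp j).card = 0 := by
    rw [Finset.card_eq_zero]
    ext v
    simp only [Finset.mem_inter, SimpleGraph.mem_neighborFinset, Finset.notMem_empty, iff_false,
      not_and]
    exact fun h1 h2 => hpartite y v h1 j hy h2
  have F5 : (G.neighborFinset x ∩ Vp j).card ≤ (Z ∩ Vp j).card := Finset.card_le_card hBj
  have F8 : (G.neighborFinset y ∩ Vp i).card ≤ n i := by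
    rw [← hcard i]
    exact Finset.card_le_card Finset.inter_subset_right
  have F6 : ∀ t, (G.neighborFinset x ∩ Vp t).card + (G.neighborFinset y ∩ Vp t).card ≤
      n t + (Z ∩ Vp t).card := by
    intro t
    have hu : ((G.neighborFinset x ∩ Vp t) ∪ (G.neighborFinset y ∩ Vp t)).card ≤ n t := by
      rw [← hcard t]
      exact Finset.card_le_card
        (Finset.union_subset Finset.inter_subset_right Finset.inter_subset_right)
    have hi : ((G.neighborFinset x ∩ Vp t) ∩ (G.neighborFinset y ∩ Vp t)).card ≤
        (Z ∩ Vp t).card := by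
      apply Finset.card_le_card
      intro z hz
      simp only [Finset.mem_inter, SimpleGraph.mem_neighborFinset] at hz
      exact Finset.mem_inter.mpr ⟨hcomZ z hz.1.1 hz.2.1, hz.1.2⟩
    have := Finset.card_union_add_card_inter (G.neighborFinset x ∩ Vp t)
      (G.neighborFinset y ∩ Vp t)
    omega
  have F7 : (Z ∩ Vp 0).card + (Z ∩ Vp 1).card + (Z ∩ Vp 2).card + (Z ∩ Vp 3).card = Z.card :=
    (split Z).symm
  have F9 := hdeg x hx y hy hxy
  have F1 : G.degree x = (G.neighborFinset x ∩ Vp 0).card + (G.neighborFinset x ∩ Vp 1).card +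
      (G.neighborFinset x ∩ Vp 2).card + (G.neighborFinset x ∩ Vp 3).card := by
    rw [← SimpleGraph.card_neighborFinset_eq_degree]; exact split _
  have F2 : G.degree y = (G.neighborFinset y ∩ Vp 0).card + (G.neighborFinset y ∩ Vp 1).card +
      (G.neighborFinset y ∩ Vp 2).card + (G.neighborFinset y ∩ Vp 3).card := by
    rw [← SimpleGraph.card_neighborFinset_eq_degree]; exact split _
  have F60 := F6 0
  have F61 := F6 1
  have F62 := F6 2
  have F63 := F6 3
  have hi4 : i = 0 ∨ i = 1 ∨ i = 2 ∨ i = 3 := by fin_cases i <;> decide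
  have hj4 : j = 0 ∨ j = 1 ∨ j = 2 ∨ j = 3 := by fin_cases j <;> decide
  rcases hi4 with rfl | rfl | rfl | rfl <;> rcases hj4 with rfl | rfl | rfl | rfl <;>
    first
      | exact hij rfl
      | omega

theorem claim1_empty_pair
    (V : Type) [Fintype V] [DecidableEq V]
    (G : SimpleGraph V) [DecidableRel G.Adj]
    (Vp : Fin 4 → Finset V) (n : Fin 4 → ℕ)
    (hdisj : ∀ i j : Fin 4, i ≠ j → Disjoint (Vp i) (Vp j))
    (hcover : ∀ v : V, ∃ i, v ∈ Vp i)
    (hcard : ∀ i, (Vp i).card = n i)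
    (hpartite : ∀ u v : V, G.Adj u v → ∀ i, u ∈ Vp i → v ∈ Vp i → False)
    (Z : Finset V)
    (hZsmall : Z.card < min (min (n 0) (n 1)) (min (n 2) (n 3)))
    -- every triangle of G contains an edge with both endpoints in Z
    (hZ : ∀ x y z : V, G.Adj x y → G.Adj x z → G.Adj y z →
      (x ∈ Z ∧ y ∈ Z) ∨ (x ∈ Z ∧ z ∈ Z) ∨ (y ∈ Z ∧ z ∈ Z))
    (i j : Fin 4) (hij : i ≠ j)
    -- every edge between Vi and Vj has degree sum greater than n1 + n2 + n3 + n4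
    (hdeg : ∀ x ∈ Vp i, ∀ y ∈ Vp j, G.Adj x y →
      n 0 + n 1 + n 2 + n 3 < G.degree x + G.degree y) :
    (∀ x ∈ Vp i \ Z, ∀ y ∈ Vp j, ¬ G.Adj x y) ∧
    (∀ x ∈ Vp i, ∀ y ∈ Vp j \ Z, ¬ G.Adj x y) := by
  have hdeg' : ∀ x ∈ Vp j, ∀ y ∈ Vp i, G.Adj x y →
      n 0 + n 1 + n 2 + n 3 < G.degree x + G.degree y := by
    intro x hx y hy hxy
    have := hdeg y hy x hx hxy.symm
    omega
  constructor
  · intro x hx y hy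
    rw [Finset.mem_sdiff] at hx
    exact key_lemma_s15 V G Vp n hdisj hcover hcard hpartite Z hZsmall hZ i j hij hdeg x hx.1 hx.2 y hy
  · intro x hx y hy hxy
    rw [Finset.mem_sdiff] at hy
    exact key_lemma_s15 V G Vp n hdisj hcover hcard hpartite Z hZsmall hZ j i hij.symm hdeg'
      y hy.1 hy.2 x hx hxy.symm
end

section
/- Let k ≥ 1 and let G be a 4-partite graph with parts V1, V2, V3, V4 of sizes n1, n2, n3, n4. If xy is an edge of G with d(x) + d(y) ≥ n1 + n2 + n3 + n4 + 2k − 1, then there is a part Vp (distinct from the parts containing x and y) such that x and y have at least k common neighbors in Vp; that is, xy is a rich edge. -/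
/-!
STATEMENT 17: Let k ≥ 1 and let G be a 4-partite graph with parts V1, V2, V3, V4
of sizes n1, n2, n3, n4. If xy is an edge of G with
d(x) + d(y) ≥ n1 + n2 + n3 + n4 + 2k − 1, then there is a part Vp (distinct from
the parts containing x and y) such that x and y have at least k common neighbors
in Vp; that is, xy is a rich edge.
-/
theorem high_degree_sum_edge_is_rich
    (k : ℕ) (hk : 1 ≤ k)
    (V : Type) [Fintype V] [DecidableEq V]
    (G : SimpleGraph V) [DecidableRel G.Adj]
    (Vp : Fin 4 → Finset V) (n : Fin 4 → ℕ)
    (hdisj : ∀ i j : Fin 4, i ≠ j → Disjoint (Vp i) (Vp j))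
    (hcover : ∀ v : V, ∃ i, v ∈ Vp i)
    (hcard : ∀ i, (Vp i).card = n i)
    (hpartite : ∀ u v : V, G.Adj u v → ∀ i, u ∈ Vp i → v ∈ Vp i → False)
    (x y : V) (hxy : G.Adj x y)
    (hdeg : n 0 + n 1 + n 2 + n 3 + 2 * k - 1 ≤ G.degree x + G.degree y) :
    ∃ p : Fin 4, x ∉ Vp p ∧ y ∉ Vp p ∧
      k ≤ ((G.neighborFinset x ∩ G.neighborFinset y) ∩ Vp p).card := by
  classical
  set Nx := G.neighborFinset x with hNx
  set Ny := G.neighborFinset y with hNy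
  choose f hf using hcover
  have hmem : ∀ v i, v ∈ Vp i ↔ f v = i := by
    intro v i
    constructor
    · intro h
      by_contra hne
      exact (Finset.disjoint_left.mp (hdisj _ _ hne) (hf v)) h
    · rintro rfl; exact hf v
  have hfil : ∀ (s : Finset V) (i : Fin 4),
      s.filter (fun v => f v = i) = s ∩ Vp i := by
    intro s i; ext v; simp [Finset.mem_filter, Finset.mem_inter, hmem]
  set c : Fin 4 → ℕ := fun i => ((Nx ∩ Ny) ∩ Vp i).card with hc
  -- degrees as sums over parts
  have hdx : G.degree x = ∑ i : Fin 4, (Nx ∩ Vp i).card := by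
    rw [← SimpleGraph.card_neighborFinset_eq_degree, ← hNx,
      Finset.card_eq_sum_card_fiberwise (fun v _ => Finset.mem_univ (f v))]
    simp [hfil]
  have hdy : G.degree y = ∑ i : Fin 4, (Ny ∩ Vp i).card := by
    rw [← SimpleGraph.card_neighborFinset_eq_degree, ← hNy,
      Finset.card_eq_sum_card_fiberwise (fun v _ => Finset.mem_univ (f v))]
    simp [hfil]
  -- per-part bound
  have hpart : ∀ i : Fin 4, (Nx ∩ Vp i).card + (Ny ∩ Vp i).card ≤ n i + c i := by
    intro i
    have h1 : (Nx ∩ Vp i) ∩ (Ny ∩ Vp i) = (Nx ∩ Ny) ∩ Vp i := by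
      ext v; simp only [Finset.mem_inter]; tauto
    have h2 : (Nx ∩ Vp i) ∪ (Ny ∩ Vp i) ⊆ Vp i := by
      intro v hv
      rcases Finset.mem_union.mp hv with h | h
      · exact (Finset.mem_inter.mp h).2
      · exact (Finset.mem_inter.mp h).2
    calc (Nx ∩ Vp i).card + (Ny ∩ Vp i).card
        = ((Nx ∩ Vp i) ∩ (Ny ∩ Vp i)).card + ((Nx ∩ Vp i) ∪ (Ny ∩ Vp i)).card := by
          rw [Finset.card_inter_add_card_union]
      _ ≤ c i + n i := by
          rw [h1]
          exact Nat.add_le_add le_rfl (by rw [← hcard i]; exact Finset.card_le_card h2)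
      _ = n i + c i := Nat.add_comm _ _
  have hsum : G.degree x + G.degree y ≤ (∑ i : Fin 4, n i) + ∑ i : Fin 4, c i := by
    rw [hdx, hdy, ← Finset.sum_add_distrib, ← Finset.sum_add_distrib]
    exact Finset.sum_le_sum fun i _ => hpart i
  have hn4 : (∑ i : Fin 4, n i) = n 0 + n 1 + n 2 + n 3 := by
    simp [Fin.sum_univ_four]
  have hcsum : 2 * k - 1 ≤ ∑ i : Fin 4, c i := by
    have := hsum
    rw [hn4] at this
    omega
  -- c vanishes on the parts of x and y
  have hca : c (f x) = 0 := by
    rw [hc, Finset.card_eq_zero]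
    ext v
    simp only [Finset.mem_inter, Finset.notMem_empty, iff_false, not_and]
    intro hv1
    exact fun hvp => hpartite x v ((SimpleGraph.mem_neighborFinset G x v).mp hv1.1)
      (f x) (hf x) hvp
  have hcb : c (f y) = 0 := by
    rw [hc, Finset.card_eq_zero]
    ext v
    simp only [Finset.mem_inter, Finset.notMem_empty, iff_false, not_and]
    intro hv1
    exact fun hvp => hpartite y v ((SimpleGraph.mem_neighborFinset G y v).mp hv1.2)
      (f y) (hf y) hvp
  have hab : f x ≠ f y := by
    intro h
    exact hpartite x y hxy (f x) (hf x) (h ▸ hf y)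
  by_contra hcon
  push_neg at hcon
  -- every part other than f x, f y has c < k
  have hkey : ∀ i : Fin 4, i ≠ f x → i ≠ f y → c i < k := by
    intro i hia hib
    have hxnot : x ∉ Vp i := by
      intro h; exact hia ((hmem x i).mp h).symm
    have hynot : y ∉ Vp i := by
      intro h; exact hib ((hmem y i).mp h).symm
    exact hcon i hxnot hynot
  set s : Finset (Fin 4) := Finset.univ \ {f x, f y} with hs
  have hsub : s ⊆ Finset.univ := Finset.sdiff_subset
  have hsumeq : (∑ i : Fin 4, c i) = ∑ i ∈ s, c i := by
    refine (Finset.sum_subset hsub ?_).symm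
    intro i _ hi
    rw [hs, Finset.mem_sdiff] at hi
    push_neg at hi
    rcases Finset.mem_insert.mp (hi (Finset.mem_univ i)) with h | h
    · rw [h]; exact hca
    · rw [Finset.mem_singleton.mp h]; exact hcb
  have hscard : s.card = 2 := by
    rw [hs, Finset.card_sdiff_of_subset (by intro i _; exact Finset.mem_univ i)]
    rw [Finset.card_pair hab]
    simp
  have hle : ∑ i ∈ s, c i ≤ s.card * (k - 1) := by
    apply Finset.sum_le_card_nsmul
    intro i hi
    rw [hs, Finset.mem_sdiff] at hi
    have h1 : i ≠ f x := fun h => hi.2 (by simp [h])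
    have h2 : i ≠ f y := fun h => hi.2 (by simp [h])
    have := hkey i h1 h2
    omega
  rw [hscard] at hle
  rw [hsumeq] at hcsum
  omega
end

section
/- Let r > t ≥ 3 and k ≥ 1 be integers and let n1, …, nr be integers with ni ≥ k for all i. Then the maximum number of edges of a subgraph of the complete r-partite graph K_{n1,…,nr} containing no k pairwise vertex-disjoint copies of K_t is at least max over all partitions 𝒫 of {1,…,r} into t−1 parts of (k−1)·n_𝒫 + Σ_{I ≠ I' ∈ 𝒫} n_I · n_{I'}, where n_I = Σ_{i∈I} n_i, m_I = min_{i∈I} n_i, n_𝒫 = max_{I∈𝒫} (n_I − m_I), and the sum is over unordered pairs of distinct parts of 𝒫. -/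
/-!
STATEMENT 18: Let r > t ≥ 3 and k ≥ 1 be integers and let n1, …, nr be integers
with ni ≥ k for all i. Then the maximum number of edges of a subgraph of the
complete r-partite graph K_{n1,…,nr} containing no k pairwise vertex-disjoint
copies of K_t is at least the maximum over all partitions 𝒫 of {1,…,r} into t−1
parts of (k−1)·n_𝒫 + Σ_{I ≠ I' ∈ 𝒫} n_I · n_{I'}, where n_I = Σ_{i∈I} n_i,
m_I = min_{i∈I} n_i, and n_𝒫 = max_{I∈𝒫} (n_I − m_I).

A partition of {1,…,r} into t−1 parts is encoded as a surjection
P : Fin r → Fin (t−1); the statement below quantifies over all such partitions,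
which expresses that the maximum number of edges is at least the maximum of the
quantity over all partitions.  The sum over unordered pairs of distinct parts
is the sum over pairs j < j'.
-/
theorem conjecture_lower_bound
    (r t k : ℕ) (ht : 3 ≤ t) (hrt : t < r) (hk : 1 ≤ k)
    (n : Fin r → ℕ) (hn : ∀ i, k ≤ n i)
    (P : Fin r → Fin (t - 1)) (hP : Function.Surjective P) :
    ∃ G : SimpleGraph (Σ i : Fin r, Fin (n i)),
      G ≤ SimpleGraph.completeMultipartiteGraph (fun i : Fin r => Fin (n i)) ∧
      -- G contains no k pairwise vertex-disjoint copies of K_t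
      (¬ ∃ S : Finset (Finset (Σ i : Fin r, Fin (n i))), S.card = k ∧
          (∀ T ∈ S, G.IsNClique t T) ∧
          (S : Set (Finset (Σ i : Fin r, Fin (n i)))).Pairwise Disjoint) ∧
      (k - 1) * (Finset.univ.sup fun j : Fin (t - 1) =>
          (∑ i ∈ Finset.univ.filter (fun i => P i = j), n i) -
            sInf (n '' {i | P i = j})) +
        (∑ j : Fin (t - 1), ∑ j' : Fin (t - 1),
          if j < j' then
            (∑ i ∈ Finset.univ.filter (fun i => P i = j), n i) *
            (∑ i ∈ Finset.univ.filter (fun i => P i = j'), n i)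
          else 0) ≤ G.edgeSet.ncard := by
  classical
  haveI : Nonempty (Fin (t - 1)) := ⟨⟨0, by omega⟩⟩
  -- choose j0 attaining the sup
  obtain ⟨j0, -, hj0⟩ := Finset.exists_mem_eq_sup (Finset.univ : Finset (Fin (t-1)))
      Finset.univ_nonempty
      (fun j : Fin (t - 1) =>
        (∑ i ∈ Finset.univ.filter (fun i => P i = j), n i) - sInf (n '' {i | P i = j}))
  -- choose i0 attaining the inf within part j0
  have hne : (n '' {i | P i = j0}).Nonempty := by
    obtain ⟨i, hi⟩ := hP j0
    exact ⟨n i, i, hi, rfl⟩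
  obtain ⟨i0, hi0P, hi0n⟩ := Nat.sInf_mem hne
  have hi0P : P i0 = j0 := hi0P
  -- the special vertices
  set special : (Σ i : Fin r, Fin (n i)) → Prop := fun v => v.1 = i0 ∧ (v.2 : ℕ) < k - 1 with hspecial
  set G : SimpleGraph (Σ i : Fin r, Fin (n i)) :=
    { Adj := fun v w => v.1 ≠ w.1 ∧ (P v.1 ≠ P w.1 ∨ special v ∨ special w)
      symm := by
        constructor
        rintro v w ⟨h1, h2⟩
        refine ⟨h1.symm, ?_⟩
        rcases h2 with h | h | h
        · exact Or.inl h.symm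
        · exact Or.inr (Or.inr h)
        · exact Or.inr (Or.inl h)
      loopless := ⟨fun v h => h.1 rfl⟩ } with hG
  have hGadj : ∀ v w : (Σ i : Fin r, Fin (n i)), G.Adj v w ↔
      (v.1 ≠ w.1 ∧ (P v.1 ≠ P w.1 ∨ special v ∨ special w)) := fun v w => Iff.rfl
  -- the special vertex finset has card k - 1
  have hk1 : k - 1 ≤ n i0 := le_trans (Nat.sub_le k 1) (hn i0)
  set emb : Fin (k-1) → (Σ i : Fin r, Fin (n i)) := fun x => ⟨i0, Fin.castLE hk1 x⟩ with hemb
  set Sp : Finset (Σ i : Fin r, Fin (n i)) := Finset.univ.filter special with hSpdef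
  have hSpEq : Sp = Finset.image emb Finset.univ := by
    ext v
    simp only [hSpdef, Finset.mem_filter, Finset.mem_univ, true_and, Finset.mem_image,
      hspecial, hemb]
    constructor
    · rintro ⟨h1, h2⟩
      rcases v with ⟨i, x⟩
      dsimp at h1 h2
      subst h1
      exact ⟨⟨(x : ℕ), h2⟩, by simp [Fin.castLE, Fin.ext_iff]⟩
    · rintro ⟨x, rfl⟩
      exact ⟨rfl, x.2⟩
  have hembinj : Function.Injective emb := by
    intro x y hxy
    exact Fin.ext (congrArg (fun v : (Σ i : Fin r, Fin (n i)) => (v.2 : ℕ)) hxy)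
  have hSpcard : Sp.card = k - 1 := by
    rw [hSpEq, Finset.card_image_of_injective _ hembinj, Finset.card_univ, Fintype.card_fin]
  refine ⟨G, ?_, ?_, ?_⟩
  · intro v w h
    exact h.1
  · -- kK_t-freeness
    rintro ⟨S, hScard, hScl, hSdisj⟩
    have hVne : Nonempty (Σ i : Fin r, Fin (n i)) := ⟨⟨⟨0, by omega⟩, ⟨0, by have := hn ⟨0, by omega⟩; omega⟩⟩⟩
    have hspecT : ∀ T ∈ S, ∃ v ∈ T, special v := by
      intro T hT
      have hclq := (hScl T hT).1
      have hcard := (hScl T hT).2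
      have hlt : (Finset.univ : Finset (Fin (t-1))).card < T.card := by
        rw [hcard, Finset.card_univ, Fintype.card_fin]; omega
      obtain ⟨v, hv, w, hw, hvw, hPeq⟩ :=
        Finset.exists_ne_map_eq_of_card_lt_of_maps_to hlt
          (f := fun v : (Σ i : Fin r, Fin (n i)) => P v.1) (fun a _ => Finset.mem_univ _)
      have hadj : G.Adj v w := hclq hv hw hvw
      rcases hadj.2 with h | h | h
      · exact absurd hPeq h
      · exact ⟨v, hv, h⟩
      · exact ⟨w, hw, h⟩
    have hcardle : S.card ≤ Sp.card := by
      refine Finset.card_le_card_of_injOn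
        (fun T => if h : ∃ v ∈ T, special v then h.choose else Classical.arbitrary (Σ i : Fin r, Fin (n i)))
        ?_ ?_
      · intro T hT
        simp only [dif_pos (hspecT T hT)]
        have := (hspecT T hT).choose_spec
        simp only [hSpdef, Finset.mem_coe, Finset.mem_filter, Finset.mem_univ, true_and]
        exact this.2
      · intro T hT T' hT' heq
        by_contra hne'
        have hd : Disjoint T T' := hSdisj hT hT' hne'
        simp only [dif_pos (hspecT T hT), dif_pos (hspecT T' hT')] at heq
        have h1 := (hspecT T hT).choose_spec.1
        have h2 := (hspecT T' hT').choose_spec.1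
        rw [heq] at h1
        exact Finset.disjoint_left.mp hd h1 h2
    rw [hScard, hSpcard] at hcardle
    omega
  · -- edge counting
    -- the "cross" edges
    set A : Finset ((Σ i : Fin r, Fin (n i)) × (Σ i : Fin r, Fin (n i))) :=
      Finset.univ.filter (fun p : (Σ i : Fin r, Fin (n i)) × (Σ i : Fin r, Fin (n i)) => P p.1.1 < P p.2.1) with hAdef
    -- vertices of part j
    have hcV : ∀ j : Fin (t-1), (Finset.univ.filter (fun v : (Σ i : Fin r, Fin (n i)) => P v.1 = j)).card =
        ∑ i ∈ Finset.univ.filter (fun i => P i = j), n i := by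
      intro j
      have hEq : Finset.univ.filter (fun v : (Σ i : Fin r, Fin (n i)) => P v.1 = j) =
          (Finset.univ.filter (fun i => P i = j)).sigma (fun i => Finset.univ) := by
        ext v
        simp [Finset.mem_sigma]
      rw [hEq, Finset.card_sigma]
      simp
    have hAcard : A.card = ∑ j : Fin (t - 1), ∑ j' : Fin (t - 1),
        if j < j' then
          (∑ i ∈ Finset.univ.filter (fun i => P i = j), n i) *
          (∑ i ∈ Finset.univ.filter (fun i => P i = j'), n i)
        else 0 := by
      rw [Finset.card_eq_sum_card_fiberwise
        (f := fun p : (Σ i : Fin r, Fin (n i)) × (Σ i : Fin r, Fin (n i)) => (P p.1.1, P p.2.1))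
        (t := Finset.univ.filter (fun jp : Fin (t-1) × Fin (t-1) => jp.1 < jp.2))
        (fun p hp => by
          simp only [hAdef, Finset.mem_coe, Finset.mem_filter, Finset.mem_univ, true_and] at hp ⊢
          exact hp)]
      rw [Finset.sum_filter, Fintype.sum_prod_type]
      refine Finset.sum_congr rfl (fun j _ => Finset.sum_congr rfl (fun j' _ => ?_))
      by_cases hlt : j < j'
      · rw [if_pos hlt, if_pos hlt]
        have hEq : A.filter (fun p : (Σ i : Fin r, Fin (n i)) × (Σ i : Fin r, Fin (n i)) => (P p.1.1, P p.2.1) = (j, j')) =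
            (Finset.univ.filter (fun v : (Σ i : Fin r, Fin (n i)) => P v.1 = j)) ×ˢ
            (Finset.univ.filter (fun v : (Σ i : Fin r, Fin (n i)) => P v.1 = j')) := by
          ext p
          simp only [hAdef, Finset.mem_filter, Finset.mem_univ, true_and,
            Finset.mem_product, Prod.mk.injEq]
          constructor
          · rintro ⟨-, h1, h2⟩; exact ⟨h1, h2⟩
          · rintro ⟨h1, h2⟩; exact ⟨by rw [h1, h2]; exact hlt, h1, h2⟩
        rw [hEq, Finset.card_product, hcV, hcV]
      · rw [if_neg hlt, if_neg hlt]
    -- the extra edges inside part j0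
    set W : Finset (Σ i : Fin r, Fin (n i)) := Finset.univ.filter (fun w : (Σ i : Fin r, Fin (n i)) => P w.1 = j0 ∧ w.1 ≠ i0) with hWdef
    have hWcard : W.card =
        ∑ i ∈ (Finset.univ.filter (fun i => P i = j0)).erase i0, n i := by
      have hEq : W = ((Finset.univ.filter (fun i => P i = j0)).erase i0).sigma
          (fun i => Finset.univ) := by
        ext v
        simp only [hWdef, Finset.mem_filter, Finset.mem_univ, true_and, Finset.mem_sigma,
          Finset.mem_erase]
        tauto
      rw [hEq, Finset.card_sigma]
      simp
    have hWge : (∑ i ∈ Finset.univ.filter (fun i => P i = j0), n i) - n i0 ≤ W.card := by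
      have hmem : i0 ∈ Finset.univ.filter (fun i => P i = j0) := by
        simp [hi0P]
      have := Finset.add_sum_erase _ n hmem
      omega
    set B : Finset ((Σ i : Fin r, Fin (n i)) × (Σ i : Fin r, Fin (n i))) := Sp ×ˢ W with hBdef
    have hABdisj : Disjoint A B := by
      rw [Finset.disjoint_left]
      intro p hpA hpB
      simp only [hAdef, Finset.mem_filter, Finset.mem_univ, true_and] at hpA
      simp only [hBdef, Finset.mem_product, hSpdef, hWdef, Finset.mem_filter,
        Finset.mem_univ, true_and] at hpB
      have h1 : P p.1.1 = j0 := by rw [hpB.1.1, hi0P]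
      have h2 : P p.2.1 = j0 := hpB.2.1
      rw [h1, h2] at hpA
      exact lt_irrefl _ hpA
    -- all pairs in A ∪ B are edges of G
    have hedge : ∀ p ∈ A ∪ B, G.Adj p.1 p.2 := by
      intro p hp
      rcases Finset.mem_union.mp hp with hp | hp
      · simp only [hAdef, Finset.mem_filter, Finset.mem_univ, true_and] at hp
        refine ⟨fun h => ?_, Or.inl (ne_of_lt hp)⟩
        rw [h] at hp; exact lt_irrefl _ hp
      · simp only [hBdef, Finset.mem_product, hSpdef, hWdef, Finset.mem_filter,
          Finset.mem_univ, true_and] at hp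
        refine ⟨fun h => hp.2.2 ?_, Or.inr (Or.inl hp.1)⟩
        rw [← h, hp.1.1]
    -- injectivity of Sym2.mk on A ∪ B
    have hinj : Set.InjOn (fun p : (Σ i : Fin r, Fin (n i)) × (Σ i : Fin r, Fin (n i)) => Sym2.mk p.1 p.2) ↑(A ∪ B) := by
      intro p hp q hq hpq
      simp only [Sym2.mk_eq_mk_iff] at hpq
      rcases hpq with h | h
      · exact h
      · -- the swapped case is impossible
        exfalso
        have hPmem : ∀ x ∈ A ∪ B, x ∈ A ∨ x ∈ B := fun x hx => Finset.mem_union.mp hx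
        have hprop : ∀ x : (Σ i : Fin r, Fin (n i)) × (Σ i : Fin r, Fin (n i)), x ∈ A ∪ B →
            (P x.1.1 < P x.2.1) ∨ (x.1.1 = i0 ∧ P x.2.1 = j0 ∧ x.2.1 ≠ i0) := by
          intro x hx
          rcases Finset.mem_union.mp hx with hx | hx
          · simp only [hAdef, Finset.mem_filter, Finset.mem_univ, true_and] at hx
            exact Or.inl hx
          · simp only [hBdef, Finset.mem_product, hSpdef, hWdef, Finset.mem_filter,
              Finset.mem_univ, true_and] at hx
            exact Or.inr ⟨hx.1.1, hx.2.1, hx.2.2⟩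
        have h1 : p.1 = q.2 := by rw [h]; rfl
        have h2 : p.2 = q.1 := by rw [h]; rfl
        rcases hprop p hp with hpc | hpc <;> rcases hprop q hq with hqc | hqc
        · rw [h1, h2] at hpc
          exact lt_asymm hpc hqc
        · rw [h1, h2] at hpc
          rw [hqc.2.1] at hpc
          have : P q.1.1 = j0 := by rw [hqc.1, hi0P]
          rw [this] at hpc
          exact lt_irrefl _ hpc
        · have e1 : P q.2.1 = j0 := by rw [← h1, hpc.1, hi0P]
          have e2 : P q.1.1 = j0 := by rw [← h2, hpc.2.1]
          rw [e1, e2] at hqc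
          exact lt_irrefl _ hqc
        · -- p.1.1 = i0 and q.2.1 ≠ i0, but p.1 = q.2
          rw [h1] at hpc
          exact hqc.2.2 hpc.1
    -- the image is inside the edge set
    have hsub : ↑((A ∪ B).image (fun p : (Σ i : Fin r, Fin (n i)) × (Σ i : Fin r, Fin (n i)) => Sym2.mk p.1 p.2)) ⊆ G.edgeSet := by
      intro e he
      simp only [Finset.coe_image, Set.mem_image, Finset.mem_coe] at he
      obtain ⟨p, hp, rfl⟩ := he
      exact hedge p hp
    have hcount : (A ∪ B).card ≤ G.edgeSet.ncard := by
      have h1 : ((A ∪ B).image (fun p : (Σ i : Fin r, Fin (n i)) × (Σ i : Fin r, Fin (n i)) => Sym2.mk p.1 p.2)).card = (A ∪ B).card :=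
        Finset.card_image_of_injOn hinj
      have h2 := Set.ncard_le_ncard hsub (Set.toFinite _)
      rw [Set.ncard_coe_finset] at h2
      omega
    -- final computation
    have hsup : (Finset.univ.sup fun j : Fin (t - 1) =>
        (∑ i ∈ Finset.univ.filter (fun i => P i = j), n i) -
          sInf (n '' {i | P i = j})) =
        (∑ i ∈ Finset.univ.filter (fun i => P i = j0), n i) - n i0 := by
      rw [hj0, hi0n]
    rw [hsup, ← hAcard]
    have hB : (k - 1) * ((∑ i ∈ Finset.univ.filter (fun i => P i = j0), n i) - n i0)
        ≤ B.card := by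
      rw [hBdef, Finset.card_product, hSpcard]
      exact Nat.mul_le_mul_left _ hWge
    have := Finset.card_union_of_disjoint hABdisj
    omega
end
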